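/- arXiv:2010.03944 — 5 statements merged into one kernel-verified Lean document; each statement's English description precedes it below -/
import Mathlib

section
/- Let G be a finite group and K a normal subgroup of G. Then β_{G/K}(uK) ≤ β_G(u) for each u ∈ G. -/
/-- The map `θ_u : G → G`, `θ_u(g) = [g^{-u}, g]` where `[x,y] = x⁻¹y⁻¹xy`
and `x^y = y⁻¹xy`. -/
def thetaMap {G : Type*} [Group G] (u g : G) : G :=
  (u⁻¹ * g⁻¹ * u)⁻¹ * g⁻¹ * (u⁻¹ * g⁻¹ * u) * g

/-- `Θ_G(u) = {g ∈ G ∣ θ_u^n(g) = g for some n > 0}`. -/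
def ThetaSet {G : Type*} [Group G] (u : G) : Set G :=
  {g | ∃ n > 0, (thetaMap u)^[n] g = g}

/-- The forward orbit of `g` under `θ_u`; for `g ∈ Θ_G(u)` this is the orbit of `g`
under the permutation that `θ_u` induces on `Θ_G(u)`. -/
def thetaOrbit {G : Type*} [Group G] (u g : G) : Set G :=
  {h | ∃ n : ℕ, (thetaMap u)^[n] g = h}

/-- The eventual orbits of `θ_u`: the orbits of the permutation induced by `θ_u`
on `Θ_G(u)`, other than the fixed orbit `{1}`. -/
def eventualOrbits {G : Type*} [Group G] (u : G) : Set (Set G) :=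
  {O | (∃ g ∈ ThetaSet u, O = thetaOrbit u g) ∧ O ≠ {1}}

/-- `β_G(u)`: the number of eventual orbits of `θ_u`. -/
noncomputable def beta {G : Type*} [Group G] (u : G) : ℕ :=
  (eventualOrbits u).ncard

lemma theta_mk {G : Type*} [Group G] (K : Subgroup G) [K.Normal] (u g : G) :
    ((thetaMap u g : G) : G ⧸ K) = thetaMap (u : G ⧸ K) (g : G ⧸ K) := by
  simp [thetaMap]

lemma theta_iterate_mk {G : Type*} [Group G] (K : Subgroup G) [K.Normal] (u g : G) (n : ℕ) :
    (((thetaMap u)^[n] g : G) : G ⧸ K) = (thetaMap (u : G ⧸ K))^[n] (g : G ⧸ K) := by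
  induction n with
  | zero => rfl
  | succ n ih => rw [Function.iterate_succ_apply', Function.iterate_succ_apply',
      theta_mk, ih]

lemma orbit_mk {G : Type*} [Group G] (K : Subgroup G) [K.Normal] (u g : G) :
    (QuotientGroup.mk '' thetaOrbit u g : Set (G ⧸ K)) = thetaOrbit (u : G ⧸ K) (g : G ⧸ K) := by
  ext x
  constructor
  · rintro ⟨y, ⟨n, rfl⟩, rfl⟩
    exact ⟨n, (theta_iterate_mk K u g n).symm⟩
  · rintro ⟨n, rfl⟩
    exact ⟨(thetaMap u)^[n] g, ⟨n, rfl⟩, theta_iterate_mk K u g n⟩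

lemma exists_iterate_mem_thetaSet {G : Type*} [Group G] [Finite G] (u g : G) :
    ∃ m, (thetaMap u)^[m] g ∈ ThetaSet u := by
  have key : ∀ i j : ℕ, i < j → (thetaMap u)^[i] g = (thetaMap u)^[j] g →
      ∃ m, (thetaMap u)^[m] g ∈ ThetaSet u := by
    intro i j hlt h
    refine ⟨i, j - i, by omega, ?_⟩
    rw [← Function.iterate_add_apply]
    have : j - i + i = j := by omega
    rw [this, ← h]
  obtain ⟨i, j, hij, h⟩ :=
    Finite.exists_ne_map_eq_of_infinite (fun n : ℕ => (thetaMap u)^[n] g)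
  rcases hij.lt_or_gt with hlt | hlt
  · exact key i j hlt h
  · exact key j i hlt h.symm

lemma thetaOrbit_iterate {G : Type*} [Group G] (u g : G) (hg : g ∈ ThetaSet u) (m : ℕ) :
    thetaOrbit u ((thetaMap u)^[m] g) = thetaOrbit u g := by
  obtain ⟨n, hn, hfix⟩ := hg
  have hfix' : Function.IsPeriodicPt (thetaMap u) n g := hfix
  ext x
  constructor
  · rintro ⟨k, rfl⟩
    exact ⟨k + m, by rw [Function.iterate_add_apply]⟩
  · rintro ⟨k, rfl⟩
    refine ⟨k + (n * m - m), ?_⟩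
    rw [Function.iterate_add_apply]
    congr 1
    rw [← Function.iterate_add_apply]
    have h1 : n * m - m + m = n * m := by
      have : m ≤ n * m := Nat.le_mul_of_pos_left m hn
      omega
    rw [h1]
    exact hfix'.mul_const m

/-- If `K` is a normal subgroup of a finite group `G`, then `β_{G/K}(uK) ≤ β_G(u)`
for each `u ∈ G`. -/
theorem beta_quotient_le {G : Type*} [Group G] [Finite G] (K : Subgroup G) [K.Normal]
    (u : G) : beta (u : G ⧸ K) ≤ beta u := by
  have hsub : eventualOrbits (u : G ⧸ K) ⊆
      (Set.image (QuotientGroup.mk : G → G ⧸ K)) '' (eventualOrbits u) := by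
    rintro O ⟨⟨gb, hgb, rfl⟩, hne⟩
    obtain ⟨g, rfl⟩ := QuotientGroup.mk_surjective gb
    obtain ⟨m, hm⟩ := exists_iterate_mem_thetaSet u g
    have himg : (QuotientGroup.mk '' thetaOrbit u ((thetaMap u)^[m] g) : Set (G ⧸ K))
        = thetaOrbit (u : G ⧸ K) (g : G ⧸ K) := by
      rw [orbit_mk, theta_iterate_mk, thetaOrbit_iterate _ _ hgb]
    refine ⟨thetaOrbit u ((thetaMap u)^[m] g), ⟨⟨_, hm, rfl⟩, ?_⟩, himg⟩
    intro h1
    apply hne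
    rw [← himg, h1]
    simp
  calc beta (u : G ⧸ K) ≤ ((Set.image (QuotientGroup.mk : G → G ⧸ K)) '' eventualOrbits u).ncard :=
        Set.ncard_le_ncard hsub (Set.Finite.image _ (Set.toFinite _))
    _ ≤ (eventualOrbits u).ncard := Set.ncard_image_le (Set.toFinite _)
end

section
/- Let G be a finite group, let L be a minimal non-soluble subgroup of G (that is, L is not soluble but every proper subgroup of L is soluble), and let u ∈ L. Then β_G(u) ≥ (|C_G(u)| / |C_G(u) ∩ N_G(L)|) · β_L(u), and moreover β_G(u) ≥ (|C_G(u)| / (|C_G(L)| · |C_{Aut(L)}(ū)|)) · β_L(u), where ū denotes the inner automorphism of L induced by conjugation by u and C_{Aut(L)}(ū) is its centralizer in the automorphism group of L. -/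
section Aux
variable {G : Type*} [Group G] {H : Type*} [Group H]

theorem thetaMap_map (f : G →* H) (u g : G) : f (thetaMap u g) = thetaMap (f u) (f g) := by
  simp [thetaMap]

theorem thetaMap_iterate_map (f : G →* H) (u : G) (n : ℕ) (g : G) :
    f ((thetaMap u)^[n] g) = (thetaMap (f u))^[n] (f g) := by
  induction n generalizing g with
  | zero => rfl
  | succ n ih =>
    rw [Function.iterate_succ_apply, Function.iterate_succ_apply, ih, thetaMap_map]

theorem thetaMap_one (u : G) : thetaMap u 1 = 1 := by simp [thetaMap]

theorem thetaMap_iterate_one (u : G) (n : ℕ) : (thetaMap u)^[n] (1 : G) = 1 := by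
  induction n with
  | zero => rfl
  | succ n ih => rw [Function.iterate_succ_apply, thetaMap_one, ih]

theorem thetaOrbit_one (u : G) : thetaOrbit u (1 : G) = {1} := by
  ext h
  constructor
  · rintro ⟨n, rfl⟩; simp [thetaMap_iterate_one]
  · rintro rfl; exact ⟨0, rfl⟩

theorem self_mem_thetaOrbit (u g : G) : g ∈ thetaOrbit u g := ⟨0, rfl⟩

theorem thetaOrbit_image (f : G →* H) (u g : G) :
    f '' thetaOrbit u g = thetaOrbit (f u) (f g) := by
  ext h
  constructor
  · rintro ⟨x, ⟨n, rfl⟩, rfl⟩; exact ⟨n, (thetaMap_iterate_map f u n g).symm⟩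
  · rintro ⟨n, rfl⟩; exact ⟨(thetaMap u)^[n] g, ⟨n, rfl⟩, thetaMap_iterate_map f u n g⟩

theorem mem_thetaSet_map (f : G →* H) {u g : G} (h : g ∈ ThetaSet u) :
    f g ∈ ThetaSet (f u) := by
  obtain ⟨n, hn, hfix⟩ := h
  exact ⟨n, hn, by rw [← thetaMap_iterate_map, hfix]⟩

theorem mem_thetaSet_of_map (f : G →* H) (hf : Function.Injective f) {u g : G}
    (h : f g ∈ ThetaSet (f u)) : g ∈ ThetaSet u := by
  obtain ⟨n, hn, hfix⟩ := h
  refine ⟨n, hn, hf ?_⟩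
  rw [thetaMap_iterate_map, hfix]

open scoped commutatorElement in
theorem thetaMap_iterate_mem_derivedSeries (u g : G) (n : ℕ) :
    (thetaMap u)^[n] g ∈ derivedSeries G n := by
  induction n with
  | zero => exact Subgroup.mem_top g
  | succ n ih =>
    rw [Function.iterate_succ_apply']
    set x := (thetaMap u)^[n] g with hx
    have hxm : x⁻¹ ∈ derivedSeries G n := inv_mem ih
    have h2 : u⁻¹ * x * u ∈ derivedSeries G n := by
      have := (derivedSeries_normal G n).conj_mem x ih u⁻¹
      simpa using this
    have key : thetaMap u x = ⁅u⁻¹ * x * u, x⁻¹⁆ := by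
      simp only [thetaMap, commutatorElement_def]
      group
    rw [key, derivedSeries_succ]
    exact Subgroup.commutator_mem_commutator h2 hxm

theorem derivedSeries_antitone' {k m : ℕ} (h : k ≤ m) :
    derivedSeries G m ≤ derivedSeries G k := by
  obtain ⟨d, rfl⟩ := Nat.exists_eq_add_of_le h
  clear h
  induction d with
  | zero => exact le_rfl
  | succ d ih =>
    refine le_trans ?_ ih
    haveI := derivedSeries_normal G (k + d)
    rw [show k + (d+1) = (k+d) + 1 from rfl, derivedSeries_succ]
    exact Subgroup.commutator_le_right _ _

theorem eq_one_of_mem_thetaSet_of_solvable [Group.IsSolvable G] {u g : G}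
    (hg : g ∈ ThetaSet u) : g = 1 := by
  obtain ⟨n, hn, hfix⟩ := hg
  by_contra h1
  have hmul : ∀ m : ℕ, (thetaMap u)^[n * m] g = g := by
    intro m
    induction m with
    | zero => rfl
    | succ m ih =>
      rw [Nat.mul_succ, Function.iterate_add_apply, hfix, ih]
  have hmem : ∀ k : ℕ, g ∈ derivedSeries G k := by
    intro k
    have h1' : g = (thetaMap u)^[n * k] g := (hmul k).symm
    have : (thetaMap u)^[n * k] g ∈ derivedSeries G (n * k) :=
      thetaMap_iterate_mem_derivedSeries u g (n * k)
    rw [← h1'] at this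
    exact derivedSeries_antitone' (Nat.le_mul_of_pos_left k hn) this
  exact not_solvable_of_mem_derivedSeries h1 hmem ‹Group.IsSolvable G›

end Aux

section Key
variable {G : Type*} [Group G]

theorem mem_conjMap_iff (L : Subgroup G) (c x : G) :
    x ∈ L.map (MulAut.conj c).toMonoidHom ↔ ∃ y ∈ L, c * y * c⁻¹ = x := by
  simp [Subgroup.mem_map, MulAut.conj_apply]

theorem card_conjMap (L : Subgroup G) (c : G) :
    Nat.card (L.map (MulAut.conj c).toMonoidHom) = Nat.card L :=
  (Nat.card_congr (L.equivMapOfInjective _ (MulAut.conj c).injective).toEquiv).symm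

theorem mem_normalizer_of_conjMap_eq (L : Subgroup G) (c c' : G)
    (h : L.map (MulAut.conj c).toMonoidHom = L.map (MulAut.conj c').toMonoidHom) :
    c⁻¹ * c' ∈ Subgroup.normalizer (L : Set G) := by
  rw [Subgroup.mem_normalizer_iff]
  intro x
  constructor
  · intro hx
    have h1 : c' * x * c'⁻¹ ∈ L.map (MulAut.conj c).toMonoidHom := by
      rw [h, mem_conjMap_iff]; exact ⟨x, hx, rfl⟩
    rw [mem_conjMap_iff] at h1
    obtain ⟨y, hy, hxy⟩ := h1
    have hy2 : y = c⁻¹ * (c * y * c⁻¹) * c := by group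
    rw [hxy] at hy2
    have h3 : c⁻¹ * (c' * x * c'⁻¹) * c = c⁻¹ * c' * x * (c⁻¹ * c')⁻¹ := by group
    rw [h3] at hy2
    rw [← hy2]
    exact hy
  · intro hx
    have h1 : c * (c⁻¹ * c' * x * (c⁻¹ * c')⁻¹) * c⁻¹ ∈ L.map (MulAut.conj c').toMonoidHom := by
      rw [← h, mem_conjMap_iff]; exact ⟨_, hx, rfl⟩
    rw [mem_conjMap_iff] at h1
    obtain ⟨y, hy, hxy⟩ := h1
    have hy2 : y = c'⁻¹ * (c' * y * c'⁻¹) * c' := by group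
    rw [hxy] at hy2
    have h3 : c'⁻¹ * (c * (c⁻¹ * c' * x * (c⁻¹ * c')⁻¹) * c⁻¹) * c' = x := by group
    rw [h3] at hy2
    exact hy2 ▸ hy

theorem no_common_elt [Finite G] (L : Subgroup G)
    (hmin : ∀ H : Subgroup G, H < L → IsSolvable H) (u : G) (hu : u ∈ L)
    (c c' : G) (hc : u * c = c * u) (hc' : u * c' = c' * u)
    (hne : L.map (MulAut.conj c).toMonoidHom ≠ L.map (MulAut.conj c').toMonoidHom)
    {w : G} (hw1 : w ≠ 1) (hwT : w ∈ ThetaSet u)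
    (hwc : w ∈ L.map (MulAut.conj c).toMonoidHom)
    (hwc' : w ∈ L.map (MulAut.conj c').toMonoidHom) : False := by
  set Hc := L.map (MulAut.conj c).toMonoidHom with hHc
  set Hc' := L.map (MulAut.conj c').toMonoidHom with hHc'
  set H := Hc ⊓ Hc' with hHdef
  have huc : c * u * c⁻¹ = u := by rw [← hc]; group
  have huc' : c' * u * c'⁻¹ = u := by rw [← hc']; group
  have huH : u ∈ H := Subgroup.mem_inf.mpr
    ⟨(mem_conjMap_iff L c u).mpr ⟨u, hu, huc⟩, (mem_conjMap_iff L c' u).mpr ⟨u, hu, huc'⟩⟩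
  have hwH : w ∈ H := ⟨hwc, hwc'⟩
  -- H is a proper subgroup of Hc
  have hlt : H < Hc := by
    refine lt_of_le_of_ne inf_le_left ?_
    intro hEq
    have hle : Hc ≤ Hc' := by rw [← hEq]; exact inf_le_right
    have : Hc = Hc' := Subgroup.eq_of_le_of_card_ge hle (by rw [card_conjMap, card_conjMap])
    exact hne this
  -- K := c⁻¹ H c ≤ L, properly
  set K := H.map (MulAut.conj c⁻¹).toMonoidHom with hK
  have hKL : K ≤ L := by
    intro x hx
    rw [hK, mem_conjMap_iff] at hx
    obtain ⟨y, hy, hxy⟩ := hx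
    have hyc : y ∈ Hc := hy.1
    rw [hHc, mem_conjMap_iff] at hyc
    obtain ⟨z, hz, hzy⟩ := hyc
    have : x = z := by rw [← hxy, ← hzy]; group
    rw [this]; exact hz
  have hKne : K ≠ L := by
    intro hKeq
    apply hlt.ne
    refine le_antisymm inf_le_left ?_
    intro x hx
    rw [hHc, mem_conjMap_iff] at hx
    obtain ⟨z, hz, hzx⟩ := hx
    rw [← hKeq, hK, mem_conjMap_iff] at hz
    obtain ⟨y, hy, hyz⟩ := hz
    have : x = y := by rw [← hzx, ← hyz]; group
    rw [this]; exact hy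
  have hKsolv : Group.IsSolvable K := hmin K (lt_of_le_of_ne hKL hKne)
  -- H = K.map (conj c), so H is solvable
  have hHK : H = K.map (MulAut.conj c).toMonoidHom := by
    apply Subgroup.ext; intro x
    rw [mem_conjMap_iff]
    constructor
    · intro hx
      refine ⟨c⁻¹ * x * c, ?_, by group⟩
      rw [hK, mem_conjMap_iff]
      exact ⟨x, hx, by group⟩
    · rintro ⟨y, hy, rfl⟩
      rw [hK, mem_conjMap_iff] at hy
      obtain ⟨z, hz, hzy⟩ := hy
      have : c * y * c⁻¹ = z := by rw [← hzy]; group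
      rw [this]; exact hz
  have hHsolv : Group.IsSolvable H := by
    rw [hHK]
    exact solvable_of_solvable_injective
      (f := (K.equivMapOfInjective _ (MulAut.conj c).injective).symm.toMonoidHom)
      (K.equivMapOfInjective _ (MulAut.conj c).injective).symm.injective
  -- now w is a nontrivial periodic point inside the solvable group H
  have hwT' : (⟨w, hwH⟩ : H) ∈ ThetaSet (⟨u, huH⟩ : H) :=
    mem_thetaSet_of_map H.subtype H.subtype_injective hwT
  have : (⟨w, hwH⟩ : H) = 1 := eq_one_of_mem_thetaSet_of_solvable hwT'
  exact hw1 (by simpa [Subtype.ext_iff] using this)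

end Key

theorem card_inf_le {G : Type*} [Group G] [Finite G] (L : Subgroup G) (u : G) (hu : u ∈ L) :
    Nat.card ((Subgroup.centralizer {u} ⊓ Subgroup.normalizer (L : Set G) : Subgroup G)) ≤
      Nat.card (Subgroup.centralizer (L : Set G)) *
        Nat.card (Subgroup.centralizer {MulAut.conj (⟨u, hu⟩ : L)} : Subgroup (MulAut L)) := by
  classical
  haveI : Finite (MulAut L) :=
    Finite.of_injective (fun (f : MulAut L) => (⇑f : L → L)) DFunLike.coe_injective
  set D := (Subgroup.centralizer {u} ⊓ Subgroup.normalizer (L : Set G) : Subgroup G) with hD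
  set ψ : D →* MulAut L :=
    L.normalizerMonoidHom.comp (Subgroup.inclusion inf_le_right) with hψ
  have hψ_apply : ∀ (d : D) (x : L), (↑(ψ d x) : G) = ↑d * ↑x * (↑d)⁻¹ := fun d x => rfl
  -- range of ψ lands in the centralizer of conj u₀
  have hrange : ψ.range ≤ Subgroup.centralizer {MulAut.conj (⟨u, hu⟩ : L)} := by
    rintro _ ⟨d, rfl⟩
    rw [Subgroup.mem_centralizer_iff]
    rintro g hg
    rw [Set.mem_singleton_iff] at hg
    subst hg
    have hdu : u * ↑d = ↑d * u := by
      have hd1 : (d : G) ∈ Subgroup.centralizer {u} := d.2.1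
      rw [Subgroup.mem_centralizer_iff] at hd1
      exact hd1 u rfl
    ext x
    show u * (↑d * ↑x * (↑d)⁻¹) * u⁻¹ = ↑d * (u * ↑x * u⁻¹) * (↑d)⁻¹
    have e1 : u * (↑d * ↑x * (↑d)⁻¹) * u⁻¹ = (u * ↑d) * ↑x * (u * ↑d)⁻¹ := by group
    have e2 : (↑d : G) * (u * ↑x * u⁻¹) * (↑d)⁻¹ = (↑d * u) * ↑x * (↑d * u)⁻¹ := by group
    rw [e1, e2, hdu]
  -- kernel of ψ embeds into the centralizer of L
  have hker : Nat.card ψ.ker ≤ Nat.card (Subgroup.centralizer (L : Set G)) := by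
    have hmem : ∀ k : ψ.ker, ((k : D) : G) ∈ Subgroup.centralizer (L : Set G) := by
      rintro ⟨d, hd⟩
      rw [Subgroup.mem_centralizer_iff]
      intro g hg
      have h1 : ψ d = 1 := hd
      have h2 : (↑(ψ d ⟨g, hg⟩) : G) = g := by rw [h1]; rfl
      rw [hψ_apply] at h2
      show g * ↑d = ↑d * g
      have : (↑d : G) * g = g * ↑d := by
        conv_rhs => rw [← h2]
        group
      exact this.symm
    have hinj : Function.Injective
        (fun k : ψ.ker => (⟨((k : D) : G), hmem k⟩ : Subgroup.centralizer (L : Set G))) := by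
      intro a b hab
      apply Subtype.ext
      apply Subtype.ext
      simpa using congrArg Subtype.val hab
    exact Nat.card_le_card_of_injective _ hinj
  have hrangecard : Nat.card ψ.range ≤
      Nat.card (Subgroup.centralizer {MulAut.conj (⟨u, hu⟩ : L)} : Subgroup (MulAut L)) :=
    Subgroup.card_le_of_le hrange
  have hsplit : Nat.card D = Nat.card ψ.range * Nat.card ψ.ker := by
    rw [Subgroup.card_eq_card_quotient_mul_card_subgroup ψ.ker]
    congr 1
    exact Nat.card_congr (QuotientGroup.quotientKerEquivRange ψ).toEquiv
  calc Nat.card D = Nat.card ψ.range * Nat.card ψ.ker := hsplit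
    _ ≤ Nat.card (Subgroup.centralizer {MulAut.conj (⟨u, hu⟩ : L)} : Subgroup (MulAut L)) *
        Nat.card (Subgroup.centralizer (L : Set G)) := Nat.mul_le_mul hrangecard hker
    _ = _ := Nat.mul_comm _ _

/-- Let `G` be a finite group, `L` a minimal non-soluble subgroup of `G` (i.e. `L` is not
soluble but every proper subgroup of `L` is soluble) and `u ∈ L`.  Then
`β_G(u) ≥ (|C_G(u)| / |C_G(u) ∩ N_G(L)|) ⬝ β_L(u)` and
`β_G(u) ≥ (|C_G(u)| / (|C_G(L)| ⬝ |C_{Aut L}(ū)|)) ⬝ β_L(u)`, where `ū` is the inner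
automorphism of `L` given by conjugation by `u`. -/
theorem beta_ge_of_minimal_nonsolvable {G : Type*} [Group G] [Finite G] (L : Subgroup G)
    (hL : ¬ IsSolvable L)
    (hmin : ∀ H : Subgroup G, H < L → IsSolvable H)
    (u : G) (hu : u ∈ L) :
    (Nat.card (Subgroup.centralizer {u}) : ℝ) /
        (Nat.card ((Subgroup.centralizer {u} ⊓ Subgroup.normalizer (L : Set G) : Subgroup G)) : ℝ) *
        (beta (⟨u, hu⟩ : L) : ℝ) ≤ (beta u : ℝ) ∧
      (Nat.card (Subgroup.centralizer {u}) : ℝ) /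
        ((Nat.card (Subgroup.centralizer (L : Set G)) : ℝ) *
          (Nat.card (Subgroup.centralizer {MulAut.conj (⟨u, hu⟩ : L)} : Subgroup (MulAut L)) : ℝ)) *
        (beta (⟨u, hu⟩ : L) : ℝ) ≤ (beta u : ℝ) := by
  classical
  set u₀ : L := (⟨u, hu⟩ : L) with hu₀
  set C := (Subgroup.centralizer {u} : Subgroup G) with hCdef
  set D := (C ⊓ Subgroup.normalizer (L : Set G) : Subgroup G) with hDdef
  have hDC : D ≤ C := inf_le_left
  set Q := C ⧸ (D.subgroupOf C) with hQdef
  -- the conjugation maps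
  have hcu : ∀ c : C, u * (c : G) = (c : G) * u := by
    intro c
    have h : (c : G) ∈ Subgroup.centralizer {u} := c.2
    rw [Subgroup.mem_centralizer_iff] at h
    exact h u rfl
  set φ : C → (L →* G) := fun c => (MulAut.conj (c : G)).toMonoidHom.comp L.subtype with hφdef
  have hφ_apply : ∀ (c : C) (x : L), φ c x = (c : G) * x * (c : G)⁻¹ := fun c x => rfl
  have hφu : ∀ c : C, φ c u₀ = u := by
    intro c
    rw [hφ_apply]
    show (c : G) * u * (c : G)⁻¹ = u
    rw [← hcu c]; group
  have hφinj : ∀ c : C, Function.Injective (φ c) :=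
    fun c => (MulAut.conj (c : G)).injective.comp L.subtype_injective
  have hφ_mem : ∀ (c : C) (x : L), φ c x ∈ L.map (MulAut.conj (c : G)).toMonoidHom :=
    fun c x => ⟨x, x.2, rfl⟩
  -- conjugated orbits are eventual orbits of u in G
  have hmemF : ∀ (c : C) (O : eventualOrbits u₀), (φ c) '' (O : Set L) ∈ eventualOrbits u := by
    rintro c ⟨O, ⟨⟨g, hgT, hgO⟩, hOne⟩⟩
    have hg1 : g ≠ 1 := by
      rintro rfl
      exact hOne (by rw [hgO, thetaOrbit_one])
    constructor
    · refine ⟨φ c g, ?_, ?_⟩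
      · rw [← hφu c]; exact mem_thetaSet_map _ hgT
      · show (φ c) '' O = _
        rw [hgO, thetaOrbit_image, hφu]
    · intro hone
      have hgmem : g ∈ O := by rw [hgO]; exact self_mem_thetaOrbit _ _
      have hmem1 : φ c g ∈ (φ c) '' O := ⟨g, hgmem, rfl⟩
      rw [hone] at hmem1
      have h1 : φ c g = 1 := hmem1
      exact hg1 (hφinj c (by rw [h1, map_one]))
  set F : Q × (eventualOrbits u₀) → (eventualOrbits u) :=
    fun p => ⟨(φ (Quotient.out p.1)) '' (p.2 : Set L), hmemF _ p.2⟩ with hFdef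
  have hFinj : Function.Injective F := by
    rintro ⟨q, O⟩ ⟨q', O'⟩ hFeq
    have hset : (φ (Quotient.out q)) '' (O : Set L) = (φ (Quotient.out q')) '' (O' : Set L) :=
      congrArg Subtype.val hFeq
    have hq : q = q' := by
      by_contra hne
      obtain ⟨⟨g, hgT, hgO⟩, hOne⟩ := O.2
      have hg1 : g ≠ 1 := by
        rintro rfl
        exact hOne (by rw [hgO, thetaOrbit_one])
      set c : C := Quotient.out q with hc
      set c' : C := Quotient.out q' with hc'
      have hmaps_ne : L.map (MulAut.conj (c : G)).toMonoidHom ≠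
          L.map (MulAut.conj (c' : G)).toMonoidHom := by
        intro heq
        have hmemN : (c : G)⁻¹ * (c' : G) ∈ Subgroup.normalizer (L : Set G) :=
          mem_normalizer_of_conjMap_eq L _ _ heq
        have hmemD : (c⁻¹ * c' : C) ∈ D.subgroupOf C := by
          rw [Subgroup.mem_subgroupOf]
          refine Subgroup.mem_inf.mpr ⟨mul_mem (inv_mem c.2) c'.2, ?_⟩
          exact hmemN
        apply hne
        have h1 : (QuotientGroup.mk c : Q) = QuotientGroup.mk c' :=
          QuotientGroup.eq.mpr hmemD
        rw [hc, hc'] at h1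
        rwa [QuotientGroup.out_eq', QuotientGroup.out_eq'] at h1
      have hgmem : g ∈ (O : Set L) := by rw [hgO]; exact self_mem_thetaOrbit _ _
      have hw1 : φ c g ≠ 1 := fun h => hg1 (hφinj c (by rw [map_one]; exact h))
      have hwT : φ c g ∈ ThetaSet u := by rw [← hφu c]; exact mem_thetaSet_map _ hgT
      have hwc : φ c g ∈ L.map (MulAut.conj (c : G)).toMonoidHom := hφ_mem _ _
      have hwc' : φ c g ∈ L.map (MulAut.conj (c' : G)).toMonoidHom := by
        have hmem2 : φ c g ∈ (φ c') '' (O' : Set L) := by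
          rw [← hset]; exact ⟨g, hgmem, rfl⟩
        obtain ⟨x, hx, hxw⟩ := hmem2
        rw [← hxw]
        exact hφ_mem _ _
      exact no_common_elt L hmin u hu _ _ (hcu c) (hcu c') hmaps_ne hw1 hwT hwc hwc'
    subst hq
    have hOO : (O : Set L) = (O' : Set L) :=
      (Set.image_injective.mpr (hφinj (Quotient.out q))) hset
    exact Prod.ext rfl (Subtype.ext hOO)
  -- counting
  have hnat : (D.subgroupOf C).index * beta u₀ ≤ beta u := by
    have h1 : Nat.card (Q × (eventualOrbits u₀)) ≤ Nat.card (eventualOrbits u) :=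
      Nat.card_le_card_of_injective F hFinj
    rw [Nat.card_prod] at h1
    have hQ : Nat.card Q = (D.subgroupOf C).index := rfl
    have hbL : Nat.card (eventualOrbits u₀) = beta u₀ := Nat.card_coe_set_eq _
    have hbG : Nat.card (eventualOrbits u) = beta u := Nat.card_coe_set_eq _
    rwa [hQ, hbL, hbG] at h1
  have hlag : Nat.card D * (D.subgroupOf C).index = Nat.card C := by
    rw [← Subgroup.card_mul_index (D.subgroupOf C)]
    congr 1
    exact (Nat.card_congr (Subgroup.subgroupOfEquivOfLe hDC).toEquiv).symm
  have hDpos : (0 : ℝ) < (Nat.card D : ℝ) := by exact_mod_cast Nat.card_pos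
  have key1 : (Nat.card C : ℝ) / (Nat.card D : ℝ) * (beta u₀ : ℝ) ≤ (beta u : ℝ) := by
    rw [← hlag]
    push_cast
    rw [mul_comm ((Nat.card D : ℝ)) (((D.subgroupOf C).index : ℝ)), mul_div_assoc,
      div_self (ne_of_gt hDpos), mul_one]
    exact_mod_cast hnat
  refine ⟨key1, ?_⟩
  have hD2 : (Nat.card D : ℝ) ≤ (Nat.card (Subgroup.centralizer (L : Set G)) : ℝ) *
      (Nat.card (Subgroup.centralizer {MulAut.conj u₀} : Subgroup (MulAut L)) : ℝ) := by
    exact_mod_cast card_inf_le L u hu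
  calc (Nat.card C : ℝ) /
        ((Nat.card (Subgroup.centralizer (L : Set G)) : ℝ) *
          (Nat.card (Subgroup.centralizer {MulAut.conj u₀} : Subgroup (MulAut L)) : ℝ)) *
        (beta u₀ : ℝ)
      ≤ (Nat.card C : ℝ) / (Nat.card D : ℝ) * (beta u₀ : ℝ) := by gcongr
    _ ≤ (beta u : ℝ) := key1
end

section
/- Let L be a non-abelian group, F a finite field, and M a simple FL-module which is ℓ-dimensional over F for some prime ℓ and on which L acts faithfully. Then every FL-module endomorphism of M is scalar multiplication by an element of F. -/
open Polynomial


set_option maxHeartbeats 1000000 in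
/-- Let `L` be a non-abelian group, `F` a finite field and `M` a simple `FL`-module of
prime dimension `ℓ` over `F` on which `L` acts faithfully.  Then every `FL`-module
endomorphism of `M` is scalar multiplication by an element of `F`. -/
theorem endomorphism_is_scalar {L : Type*} [Group L] (hna : ∃ a b : L, a * b ≠ b * a)
    {F : Type*} [Field F] [Fintype F]
    {M : Type*} [AddCommGroup M] [Module F M]
    (ρ : Representation F L M)
    (hfaithful : ∀ g : L, ρ g = 1 → g = 1)
    {ℓ : ℕ} (hℓ : ℓ.Prime) (hdim : Module.finrank F M = ℓ)
    (hM : Nontrivial M)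
    (hsimple : ∀ W : Submodule F M, (∀ (g : L), ∀ m ∈ W, ρ g m ∈ W) → W = ⊥ ∨ W = ⊤)
    (φ : M →ₗ[F] M) (hφ : ∀ (g : L) (m : M), φ (ρ g m) = ρ g (φ m)) :
    ∃ c : F, ∀ m : M, φ m = c • m := by
  haveI : FiniteDimensional F M := Module.finite_of_finrank_pos (by rw [hdim]; exact hℓ.pos)
  have hcomm : ∀ (g : L) (q : F[X]), Commute (ρ g) (aeval φ q) := by
    intro g q
    have hφg : Commute (ρ g) φ := by
      show ρ g * φ = φ * ρ g
      ext m; exact (hφ g m).symm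
    have hmem : aeval φ q ∈ Algebra.adjoin F {φ} := by
      rw [Algebra.adjoin_singleton_eq_range_aeval]; exact ⟨q, rfl⟩
    exact Algebra.commute_of_mem_adjoin_singleton_of_commute hmem hφg
  have hint : IsIntegral F φ := Algebra.IsIntegral.isIntegral φ
  set p := minpoly F φ with hp
  have hp0 : p ≠ 0 := minpoly.ne_zero hint
  have hmon : p.Monic := minpoly.monic hint
  have haev : aeval φ p = 0 := minpoly.aeval F φ
  have hdegpos : 0 < p.natDegree := minpoly.natDegree_pos hint
  -- kernels of aeval terms are L-invariant
  have hker : ∀ q : F[X], q.natDegree < p.natDegree → aeval φ q ≠ 0 →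
      Function.Injective (aeval φ q) := by
    intro q hdeg hne
    have hW := hsimple (LinearMap.ker (aeval φ q)) (by
      intro g m hm
      rw [LinearMap.mem_ker] at hm ⊢
      have h2 : (aeval φ q) (ρ g m) = ρ g ((aeval φ q) m) :=
        (congrArg (fun f => f m) (hcomm g q).eq).symm
      rw [h2, hm, map_zero])
    rcases hW with h | h
    · rw [← LinearMap.ker_eq_bot]; exact h
    · exfalso
      apply hne
      ext m
      have : m ∈ LinearMap.ker (aeval φ q) := h ▸ Submodule.mem_top
      simpa using this
  -- p is irreducible
  have hirr : Irreducible p := by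
    constructor
    · intro hu
      rw [Polynomial.isUnit_iff_degree_eq_zero, Polynomial.degree_eq_natDegree hp0] at hu
      have : p.natDegree = 0 := by exact_mod_cast hu
      omega
    · intro a b hab
      by_contra hcon
      push_neg at hcon
      obtain ⟨ha, hb⟩ := hcon
      have ha0 : a ≠ 0 := fun h => hp0 (by rw [hab, h, zero_mul])
      have hb0 : b ≠ 0 := fun h => hp0 (by rw [hab, h, mul_zero])
      have hda : 0 < a.natDegree := Nat.pos_of_ne_zero fun h =>
        ha (Polynomial.isUnit_iff_degree_eq_zero.mpr
          (by rw [Polynomial.degree_eq_natDegree ha0, h]; rfl))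
      have hdb : 0 < b.natDegree := Nat.pos_of_ne_zero fun h =>
        hb (Polynomial.isUnit_iff_degree_eq_zero.mpr
          (by rw [Polynomial.degree_eq_natDegree hb0, h]; rfl))
      have hsum : p.natDegree = a.natDegree + b.natDegree := by
        rw [hab, Polynomial.natDegree_mul ha0 hb0]
      have haev' : aeval φ a * aeval φ b = 0 := by rw [← map_mul, ← hab, haev]
      have haneq : aeval φ a ≠ 0 := by
        intro h
        have hdvd : p ∣ a := minpoly.dvd F φ h
        have := Polynomial.natDegree_le_of_dvd hdvd ha0
        omega
      have hinj : Function.Injective (aeval φ a) := hker a (by omega) haneq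
      have hbzero : aeval φ b = 0 := by
        ext m
        apply hinj
        have := congrArg (fun f => f m) haev'
        simpa using this
      have hdvd : p ∣ b := minpoly.dvd F φ hbzero
      have := Polynomial.natDegree_le_of_dvd hdvd hb0
      omega
  -- the field K = F[X]/(p) acts on M
  haveI := Fact.mk hirr
  let K := AdjoinRoot p
  have hlift : ∀ a ∈ Ideal.span {p}, (aeval φ).toRingHom a = 0 := by
    intro a ha
    obtain ⟨q, hq⟩ := Ideal.mem_span_singleton'.mp ha
    simp only [AlgHom.toRingHom_eq_coe, RingHom.coe_coe]
    rw [← hq, map_mul, haev, mul_zero]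
  let ψ : K →+* Module.End F M := Ideal.Quotient.lift _ (aeval φ).toRingHom hlift
  have hψmk : ∀ q : F[X], ψ (AdjoinRoot.mk p q) = aeval φ q := fun q => rfl
  letI : Module K M := Module.compHom M ψ
  have hsmul : ∀ (k : K) (m : M), k • m = ψ k m := fun _ _ => rfl
  letI : IsScalarTower F K M := ⟨fun c k m => by
    rw [hsmul, hsmul, Algebra.smul_def, map_mul]
    have : ψ (algebraMap F K c) = algebraMap F (Module.End F M) c := by
      have h1 : algebraMap F K c = AdjoinRoot.mk p (C c) := rfl
      rw [h1, hψmk, aeval_C]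
    rw [this]
    simp [Module.algebraMap_end_apply, Module.End.mul_apply]⟩
  have hrkK : Module.finrank F K = p.natDegree := by
    rw [(AdjoinRoot.powerBasis hp0).finrank]
    rfl
  have htower : Module.finrank F K * Module.finrank K M = Module.finrank F M :=
    Module.finrank_mul_finrank F K M
  rw [hrkK, hdim] at htower
  have hdvd : p.natDegree ∣ ℓ := ⟨_, htower.symm⟩
  rcases (Nat.Prime.eq_one_or_self_of_dvd hℓ _ hdvd) with hd1 | hdl
  · -- degree one: φ is scalar
    have hpform : p = X + C (p.coeff 0) := hmon.eq_X_add_C hd1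
    refine ⟨-(p.coeff 0), fun m => ?_⟩
    have := congrArg (fun f => f m) haev
    rw [hpform] at this
    simp only [map_add, aeval_X, aeval_C, LinearMap.add_apply,
      Module.algebraMap_end_apply, LinearMap.zero_apply] at this
    have : φ m + p.coeff 0 • m = 0 := this
    rw [neg_smul]
    exact eq_neg_of_add_eq_zero_left this
  · -- degree ℓ: M is 1-dimensional over K, contradiction with non-abelian
    exfalso
    have h1 : Module.finrank K M = 1 := by
      rw [hdl] at htower
      exact Nat.eq_of_mul_eq_mul_left hℓ.pos (by omega)
    obtain ⟨v, hv0, hv⟩ := finrank_eq_one_iff'.mp h1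
    have hKlin : ∀ (g : L) (k : K) (m : M), ρ g (k • m) = k • ρ g m := by
      intro g k m
      induction k using AdjoinRoot.induction_on with
      | ih q =>
        rw [hsmul, hsmul, hψmk]
        exact congrArg (fun f => f m) (hcomm g q).eq
    obtain ⟨a, b, hab⟩ := hna
    apply hab
    have hrep : ρ (a * b) = ρ (b * a) := by
      obtain ⟨ka, hka⟩ := hv (ρ a v)
      obtain ⟨kb, hkb⟩ := hv (ρ b v)
      ext m
      obtain ⟨c, hc⟩ := hv m
      rw [← hc]
      rw [map_mul, map_mul]
      simp only [Module.End.mul_apply]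
      rw [hKlin b c v, hKlin a c (ρ b v), ← hkb, hKlin a kb v, ← hka,
        hKlin a c v, hKlin b c (ρ a v), ← hka, hKlin b ka v, ← hkb,
        smul_comm ka kb]
    have h1 : ρ ((a * b) * (b * a)⁻¹) = 1 := by
      rw [map_mul, hrep, ← map_mul, mul_inv_cancel, map_one]
    have := hfaithful _ h1
    exact mul_inv_eq_one.mp this
end

section
/- Let L be a non-abelian group, F a finite field, and M a simple FL-module which is ℓ-dimensional over F for some prime ℓ and on which L acts faithfully. Suppose L ≤ G and N is an FG-module on which G acts faithfully, and suppose that N, regarded as an FL-module by restriction, is isomorphic to the direct sum M^m of m copies of M. Then |C_G(L)| ≤ |GLₘ(F)|, where C_G(L) is the centralizer of L in G and GLₘ(F) is the group of invertible m×m matrices over F. -/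
open Polynomial in
set_option maxHeartbeats 1000000 in
lemma schur_scalar {F : Type*} [Field F] [Fintype F]
    {L : Type*} [Group L]
    {M : Type*} [AddCommGroup M] [Module F M]
    (ρM : Representation F L M)
    (hna : ∃ a b : L, a * b ≠ b * a)
    (hfaithM : ∀ g : L, ρM g = 1 → g = 1)
    {ℓ : ℕ} (hℓ : ℓ.Prime) (hdim : Module.finrank F M = ℓ)
    (hM : Nontrivial M)
    (hsimple : ∀ W : Submodule F M, (∀ (g : L), ∀ m ∈ W, ρM g m ∈ W) → W = ⊥ ∨ W = ⊤)
    (φ : Module.End F M) (hφ : ∀ l : L, ρM l * φ = φ * ρM l) :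
    ∃ c : F, ∀ x : M, φ x = c • x := by
  classical
  have hfd : FiniteDimensional F M :=
    Module.finite_of_finrank_pos (by rw [hdim]; exact hℓ.pos)
  -- Schur: nonzero commuting endomorphisms are bijective
  have schur : ∀ ψ : Module.End F M, (∀ l : L, ρM l * ψ = ψ * ρM l) → ψ ≠ 0 →
      Function.Bijective ψ := by
    intro ψ hc hne
    have happ : ∀ (l : L) (x : M), ψ (ρM l x) = ρM l (ψ x) := by
      intro l x
      have := congrArg (fun f : Module.End F M => f x) (hc l)
      simpa [Module.End.mul_apply] using this.symm
    constructor
    · rw [← LinearMap.ker_eq_bot]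
      rcases hsimple (LinearMap.ker ψ) (fun g x hx => by
        rw [LinearMap.mem_ker] at hx ⊢
        rw [happ, hx, map_zero]) with h | h
      · exact h
      · exact absurd (LinearMap.ext fun x =>
          (LinearMap.mem_ker (f := ψ)).1 (h ▸ Submodule.mem_top)) hne
    · rw [← LinearMap.range_eq_top]
      rcases hsimple (LinearMap.range ψ) (fun g x hx => by
        obtain ⟨y, rfl⟩ := hx
        exact ⟨ρM g y, (happ g y)⟩) with h | h
      · exfalso
        apply hne
        apply LinearMap.ext
        intro x
        have : ψ x ∈ LinearMap.range ψ := ⟨x, rfl⟩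
        rw [h] at this
        simpa using this
      · exact h
  -- polynomials in φ commute with the action
  have hcommpoly : ∀ q : F[X], ∀ l : L,
      ρM l * (aeval φ q) = (aeval φ q) * ρM l := by
    intro q l
    induction q using Polynomial.induction_on with
    | C c => rw [aeval_C]; exact (Algebra.commutes c (ρM l)).symm
    | add q r hq hr => rw [map_add, mul_add, add_mul, hq, hr]
    | monomial n c hq =>
        have h2 : aeval φ (C c * X ^ (n + 1)) = aeval φ (C c * X ^ n) * φ := by
          rw [pow_succ, ← mul_assoc, map_mul, aeval_X]
        rw [h2, ← mul_assoc, hq, mul_assoc, hφ l, ← mul_assoc]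
  -- the minimal polynomial of φ
  haveI : Module.Finite F (Module.End F M) := by infer_instance
  haveI : Nontrivial (Module.End F M) := by
    obtain ⟨x, hx⟩ := exists_ne (0 : M)
    refine ⟨0, 1, fun h => hx ?_⟩
    have := congrArg (fun f : Module.End F M => f x) h
    simpa using this.symm
  have hint : IsIntegral F φ := IsIntegral.of_finite F φ
  set p : F[X] := minpoly F φ with hp
  have hpne : p ≠ 0 := minpoly.ne_zero hint
  have hpmonic : p.Monic := minpoly.monic hint
  have haevalp : aeval φ p = 0 := minpoly.aeval F φ
  -- p is irreducible
  have hirr : Irreducible p := by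
    refine ⟨minpoly.not_isUnit F φ, ?_⟩
    intro a b hab
    have ha : a ≠ 0 := fun h => hpne (by rw [hab, h, zero_mul])
    have hb : b ≠ 0 := fun h => hpne (by rw [hab, h, mul_zero])
    have hdeg : a.natDegree + b.natDegree = p.natDegree := by
      rw [hab, Polynomial.natDegree_mul ha hb]
    have hab0 : aeval φ a * aeval φ b = 0 := by
      rw [← map_mul, ← hab, haevalp]
    by_cases hbz : aeval φ b = 0
    · left
      have := minpoly.degree_le_of_ne_zero F φ hb hbz
      have hble : p.natDegree ≤ b.natDegree := Polynomial.natDegree_le_natDegree this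
      have ha0 : a.natDegree = 0 := by omega
      rw [Polynomial.eq_C_of_natDegree_eq_zero ha0]
      exact Polynomial.isUnit_C.2 (isUnit_iff_ne_zero.2 (fun h => ha (by
        rw [Polynomial.eq_C_of_natDegree_eq_zero ha0, h, map_zero])))
    · right
      have hbbij := schur _ (hcommpoly b) hbz
      have haz : aeval φ a = 0 := by
        apply LinearMap.ext
        intro y
        obtain ⟨x, rfl⟩ := hbbij.2 y
        have := congrArg (fun f : Module.End F M => f x) hab0
        simpa [Module.End.mul_apply] using this
      have := minpoly.degree_le_of_ne_zero F φ ha haz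
      have hale : p.natDegree ≤ a.natDegree := Polynomial.natDegree_le_natDegree this
      have hb0 : b.natDegree = 0 := by omega
      rw [Polynomial.eq_C_of_natDegree_eq_zero hb0]
      exact Polynomial.isUnit_C.2 (isUnit_iff_ne_zero.2 (fun h => hb (by
        rw [Polynomial.eq_C_of_natDegree_eq_zero hb0, h, map_zero])))
  -- the field K = F[X]/(p)
  haveI : Fact (Irreducible p) := ⟨hirr⟩
  set K := AdjoinRoot p with hK
  -- ring hom K →+* End F M
  have hker : ∀ q ∈ Ideal.span ({p} : Set F[X]), (aeval φ).toRingHom q = 0 := by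
    intro q hq
    obtain ⟨c, rfl⟩ := Ideal.mem_span_singleton.1 hq
    simp [map_mul, haevalp]
  set f : K →+* Module.End F M :=
    Ideal.Quotient.lift (Ideal.span ({p} : Set F[X])) (aeval φ).toRingHom hker with hf
  have hfmk : ∀ q : F[X], f (AdjoinRoot.mk p q) = aeval φ q := fun q =>
    Ideal.Quotient.lift_mk _ _ _
  letI : Module K M := Module.compHom M f
  have hsmul : ∀ (k : K) (x : M), k • x = f k x := fun k x => rfl
  haveI : IsScalarTower F K M := ⟨fun c k x => by
    rw [hsmul, hsmul]
    have h1 : (c • k) = algebraMap F K c * k := by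
      rw [Algebra.smul_def]
    have h2 : f (algebraMap F K c) = algebraMap F (Module.End F M) c := by
      rw [AdjoinRoot.algebraMap_eq]
      show f (AdjoinRoot.mk p (C c)) = _
      rw [hfmk, aeval_C]
    rw [h1, map_mul, h2, Module.End.mul_apply, Module.algebraMap_end_apply]⟩
  have hfinK : Module.finrank F K = p.natDegree :=
    (AdjoinRoot.powerBasis hpne).finrank
  have htower : p.natDegree * Module.finrank K M = ℓ := by
    rw [← hfinK, Module.finrank_mul_finrank F K M, hdim]
  rcases (hℓ.eq_one_or_self_of_dvd p.natDegree ⟨_, htower.symm⟩) with h1 | hl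
  · -- φ is scalar
    have hXC : p = X + C (p.coeff 0) := hpmonic.eq_X_add_C h1
    refine ⟨-(p.coeff 0), fun x => ?_⟩
    have := congrArg (fun f : Module.End F M => f x) haevalp
    rw [hXC] at this
    simp only [map_add, aeval_X, aeval_C, LinearMap.add_apply, LinearMap.zero_apply,
      Module.algebraMap_end_apply] at this
    have h2 : φ x + p.coeff 0 • x = 0 := this
    rw [neg_smul]
    exact eq_neg_of_add_eq_zero_left h2
  · -- dim_K M = 1 forces L abelian, contradiction
    exfalso
    have hm1 : Module.finrank K M = 1 := by
      have := htower
      rw [hl] at this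
      exact Nat.eq_of_mul_eq_mul_left hℓ.pos (this.trans (mul_one ℓ).symm)
    obtain ⟨v, hv0, hvspan⟩ := finrank_eq_one_iff'.1 hm1
    obtain ⟨a, b, hab⟩ := hna
    apply hab
    have hKlin : ∀ (l : L) (k : K) (x : M), ρM l (k • x) = k • ρM l x := by
      intro l k x
      obtain ⟨q, rfl⟩ := AdjoinRoot.mk_surjective k
      rw [hsmul, hsmul, hfmk]
      have := congrArg (fun f : Module.End F M => f x) (hcommpoly q l)
      simpa [Module.End.mul_apply] using this
    obtain ⟨ka, hka⟩ := hvspan (ρM a v)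
    obtain ⟨kb, hkb⟩ := hvspan (ρM b v)
    have hcomm : ρM a * ρM b = ρM b * ρM a := by
      apply LinearMap.ext
      intro w
      obtain ⟨k, hk⟩ := hvspan w
      simp only [Module.End.mul_apply]
      rw [← hk]
      have e1 : ρM a (ρM b (k • v)) = k • (kb • (ka • v)) := by
        rw [hKlin b k v, ← hkb, hKlin a k (kb • v), hKlin a kb v, ← hka]
      have e2 : ρM b (ρM a (k • v)) = k • (ka • (kb • v)) := by
        rw [hKlin a k v, ← hka, hKlin b k (ka • v), hKlin b ka v, ← hkb]
      rw [e1, e2]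
      exact congrArg (k • ·) (by rw [smul_smul, smul_smul, mul_comm])
    have hmul : ρM (a * b) = ρM (b * a) := by rw [map_mul, map_mul, hcomm]
    have h1 : ρM ((a * b) * (b * a)⁻¹) = 1 := by
      rw [map_mul, hmul, ← map_mul, mul_inv_cancel, map_one]
    have := hfaithM _ h1
    rwa [mul_inv_eq_one] at this

set_option maxHeartbeats 1000000

/-- Let `L ≤ G`, let `M` be a simple `FL`-module of prime dimension `ℓ` over the finite
field `F` on which `L` acts faithfully, and let `N` be an `FG`-module on which `G` acts
faithfully.  If `N`, regarded as an `FL`-module by restriction, is isomorphic to `M^m`,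
then `|C_G(L)| ≤ |GLₘ(F)|`. -/
theorem card_centralizer_le_card_GL {F : Type*} [Field F] [Fintype F]
    {G : Type*} [Group G] (L : Subgroup G)
    {M : Type*} [AddCommGroup M] [Module F M]
    (ρM : Representation F L M)
    (hna : ∃ a b : L, a * b ≠ b * a)
    (hfaithM : ∀ g : L, ρM g = 1 → g = 1)
    {ℓ : ℕ} (hℓ : ℓ.Prime) (hdim : Module.finrank F M = ℓ)
    (hM : Nontrivial M)
    (hsimple : ∀ W : Submodule F M, (∀ (g : L), ∀ m ∈ W, ρM g m ∈ W) → W = ⊥ ∨ W = ⊤)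
    {N : Type*} [AddCommGroup N] [Module F N]
    (ρN : Representation F G N)
    (hfaithN : ∀ g : G, ρN g = 1 → g = 1)
    {m : ℕ} (e : N ≃ₗ[F] (Fin m → M))
    (he : ∀ (l : L) (x : N), e (ρN (l : G) x) = fun i => ρM l (e x i)) :
    Nat.card (Subgroup.centralizer (L : Set G)) ≤
      Nat.card (Matrix.GeneralLinearGroup (Fin m) F) := by
  classical
  have hscal := fun (φ : Module.End F M) (hφ : ∀ l : L, ρM l * φ = φ * ρM l) =>
    schur_scalar ρM hna hfaithM hℓ hdim hM hsimple φ hφ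
  set τ : G → Module.End F (Fin m → M) := fun g =>
    e.toLinearMap ∘ₗ (ρN g : Module.End F N) ∘ₗ e.symm.toLinearMap with hτ
  have τ_apply : ∀ g x, τ g x = e (ρN g (e.symm x)) := fun g x => rfl
  have τ_mul : ∀ g g' : G, ∀ x, τ (g * g') x = τ g (τ g' x) := by
    intro g g' x
    simp only [τ_apply, map_mul, Module.End.mul_apply, LinearEquiv.symm_apply_apply]
  have τ_one : ∀ x, τ (1 : G) x = x := by
    intro x
    simp only [τ_apply, map_one, Module.End.one_apply, LinearEquiv.apply_symm_apply]
  have τ_comm : ∀ g ∈ Subgroup.centralizer (L : Set G), ∀ (l : L) (x : Fin m → M),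
      τ g (fun i => ρM l (x i)) = fun i => ρM l (τ g x i) := by
    intro g hg l x
    have hgl : (l : G) * g = g * (l : G) :=
      Subgroup.mem_centralizer_iff.1 hg (l : G) l.2
    have hx : (fun i => ρM l (x i)) = e (ρN (l : G) (e.symm x)) := by
      rw [he l (e.symm x)]
      simp only [LinearEquiv.apply_symm_apply]
    rw [hx, τ_apply]
    rw [LinearEquiv.symm_apply_apply]
    have hswap : ρN g (ρN (l : G) (e.symm x)) = ρN (l : G) (ρN g (e.symm x)) := by
      have h1 : ρN ((l : G) * g) = ρN (g * (l : G)) := by rw [hgl]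
      rw [map_mul, map_mul] at h1
      have := congrArg (fun f : Module.End F N => f (e.symm x)) h1
      simpa [Module.End.mul_apply] using this.symm
    rw [hswap, he l]
    funext i
    rw [τ_apply]
  obtain ⟨x0, hx0⟩ := exists_ne (0 : M)
  -- matrix entries
  have hA : ∀ g ∈ Subgroup.centralizer (L : Set G),
      ∃ Ag : Matrix (Fin m) (Fin m) F, ∀ x i, τ g x i = ∑ j, Ag i j • x j := by
    intro g hg
    have hentry : ∀ i j : Fin m, ∃ c : F, ∀ v : M, τ g (Pi.single j v) i = c • v := by
      intro i j
      set ψ : Module.End F M :=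
        (LinearMap.proj i) ∘ₗ (τ g) ∘ₗ (LinearMap.single F (fun _ : Fin m => M) j) with hψ
      have hψ_apply : ∀ v, ψ v = τ g (Pi.single j v) i := fun v => rfl
      have hcomm : ∀ l : L, ρM l * ψ = ψ * ρM l := by
        intro l
        apply LinearMap.ext
        intro v
        simp only [Module.End.mul_apply, hψ_apply]
        have h1 : (Pi.single j (ρM l v) : Fin m → M) = fun i => ρM l ((Pi.single j v : Fin m → M) i) := by
          funext k
          rcases eq_or_ne k j with rfl | hk
          · simp
          · simp [Pi.single_eq_of_ne hk]
        rw [h1, τ_comm g hg l]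
      obtain ⟨c, hc⟩ := hscal ψ hcomm
      exact ⟨c, fun v => by rw [← hψ_apply, hc]⟩
    choose c hc using hentry
    refine ⟨Matrix.of c, fun x i => ?_⟩
    have hx : x = ∑ j, Pi.single j (x j) := (Finset.univ_sum_single x).symm
    calc τ g x i = τ g (∑ j, Pi.single j (x j)) i := by rw [← hx]
    _ = ∑ j, τ g (Pi.single j (x j)) i := by rw [map_sum, Finset.sum_apply]
    _ = ∑ j, c i j • x j := Finset.sum_congr rfl fun j _ => hc i j (x j)
  -- uniqueness of the matrix
  have hsum : ∀ (B : Matrix (Fin m) (Fin m) F) (i k : Fin m),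
      ∑ j, B i j • (Pi.single k x0 : Fin m → M) j = B i k • x0 := by
    intro B i k
    rw [Finset.sum_eq_single k]
    · rw [Pi.single_eq_same]
    · intro j _ hj
      rw [Pi.single_eq_of_ne hj, smul_zero]
    · intro h
      exact absurd (Finset.mem_univ k) h
  have huniq : ∀ B C : Matrix (Fin m) (Fin m) F,
      (∀ x : Fin m → M, ∀ i, ∑ j, B i j • x j = ∑ j, C i j • x j) → B = C := by
    intro B C h
    ext i k
    have h1 := h (Pi.single k x0) i
    rw [hsum, hsum] at h1
    exact smul_left_injective F hx0 h1
  have hA' : ∀ g : Subgroup.centralizer (L : Set G),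
      ∃ Ag : Matrix (Fin m) (Fin m) F, ∀ x i, τ (g : G) x i = ∑ j, Ag i j • x j :=
    fun g => hA g g.2
  choose A hAspec using hA'
  have Amul : ∀ g g', A (g * g') = A g * A g' := by
    intro g g'
    apply huniq
    intro x i
    rw [← hAspec (g * g') x i]
    have hcoe : ((g * g' : Subgroup.centralizer (L : Set G)) : G) = (g : G) * (g' : G) := rfl
    calc τ ((g * g' : Subgroup.centralizer (L : Set G)) : G) x i
        = τ (g : G) (τ (g' : G) x) i := by rw [hcoe, τ_mul]
      _ = ∑ j, A g i j • (τ (g' : G) x) j := hAspec g _ i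
      _ = ∑ j, A g i j • ∑ k, A g' j k • x k :=
          Finset.sum_congr rfl fun j _ => by rw [hAspec g' x j]
      _ = ∑ j, ∑ k, (A g i j * A g' j k) • x k := by
          refine Finset.sum_congr rfl fun j _ => ?_
          rw [Finset.smul_sum]
          exact Finset.sum_congr rfl fun k _ => by rw [smul_smul]
      _ = ∑ k, ∑ j, (A g i j * A g' j k) • x k := Finset.sum_comm
      _ = ∑ k, (A g * A g') i k • x k := by
          refine Finset.sum_congr rfl fun k _ => ?_
          rw [Matrix.mul_apply, Finset.sum_smul]
  have Aone : A 1 = 1 := by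
    apply huniq
    intro x i
    rw [← hAspec 1 x i]
    have hcoe : ((1 : Subgroup.centralizer (L : Set G)) : G) = 1 := rfl
    rw [hcoe, τ_one]
    rw [Finset.sum_eq_single i]
    · rw [Matrix.one_apply_eq, one_smul]
    · intro j _ hj
      rw [Matrix.one_apply_ne (Ne.symm hj), zero_smul]
    · intro h
      exact absurd (Finset.mem_univ i) h
  let Φ : Subgroup.centralizer (L : Set G) → Matrix.GeneralLinearGroup (Fin m) F := fun g =>
    { val := A g
      inv := A g⁻¹
      val_inv := by rw [← Amul, mul_inv_cancel, Aone]
      inv_val := by rw [← Amul, inv_mul_cancel, Aone] }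
  have hinj : Function.Injective Φ := by
    intro g g' hgg'
    have hAeq : A g = A g' := congrArg Units.val hgg'
    have hτeq : ∀ x, τ (g : G) x = τ (g' : G) x := by
      intro x
      funext i
      rw [hAspec g, hAspec g', hAeq]
    have hρ : ρN (g : G) = ρN (g' : G) := by
      apply LinearMap.ext
      intro y
      have h1 : τ (g : G) (e y) = e (ρN (g : G) y) := by
        rw [τ_apply, LinearEquiv.symm_apply_apply]
      have h2 : τ (g' : G) (e y) = e (ρN (g' : G) y) := by
        rw [τ_apply, LinearEquiv.symm_apply_apply]
      exact e.injective (h1.symm.trans ((hτeq (e y)).trans h2))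
    have h3 : ρN ((g : G) * (g' : G)⁻¹) = 1 := by
      rw [map_mul, hρ, ← map_mul, mul_inv_cancel, map_one]
    have h4 := hfaithN _ h3
    rw [mul_inv_eq_one] at h4
    exact Subtype.ext h4
  haveI : Finite (Matrix.GeneralLinearGroup (Fin m) F) :=
    inferInstanceAs (Finite (Matrix (Fin m) (Fin m) F)ˣ)
  exact Nat.card_le_card_of_injective Φ hinj
end

section
/- Let q = 2^f ≥ 4 be a power of 2, let G = SL₂(F_q), and let u be the matrix with rows (0, 1) and (1, 0). Then β_G(u) ≥ (q − 2)/2. In particular, every element w of SL₂(F_q) of the form with rows (1, 1) and (μ, μ+1) for μ ∈ F_q \ F₂ lies in a nontrivial eventual orbit of θ_u, and if w with entries a, b, c, d satisfies a+d ≠ 0 and b+c ≠ 0 and θ_u(w) has entries A, B, C, D with A+D ≠ 0 and B+C ≠ 0, then (A+D)/(B+C) = ((a+d)/(b+c))⁻¹. -/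
section Identities
variable {F : Type*} [Field F]

lemma id1 (h2 : (2:F) = 0) (a b c d : F) (hdet : a * d - b * c = 1) :
    ((-1)*c^2*d^2 + (1)*c^4 + (-1)*b*c*d^2 + (1)*a*c^2*d + (1)*a*b^2*d + (1)*a^2*d^2 + (-1)*a^2*c^2 + (-1)*a^2*b*c) + ((-1)*b*c*d^2 + (-1)*b^2*d^2 + (1)*b^4 + (1)*a*c^2*d + (1)*a*b^2*d + (1)*a^2*d^2 + (-1)*a^2*b*c + (-1)*a^2*b^2) = (b+c)^2*((a+d)+(b+c))^2 := by
  linear_combination ((2) + (-2)*b*c + (2)*a*d) * hdet + ((1) + (-1)*c^2*d^2 + (-1)*c^3*d + (-2)*b*c*d^2 + (-3)*b*c^2*d + (-2)*b*c^3 + (-1)*b^2*d^2 + (-3)*b^2*c*d + (-4)*b^2*c^2 + (-1)*b^3*d + (-2)*b^3*c + (-1)*a*c^3 + (-3)*a*b*c^2 + (-3)*a*b^2*c + (-1)*a*b^3 + (-1)*a^2*c^2 + (-2)*a^2*b*c + (-1)*a^2*b^2) * h2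

lemma id2 (h2 : (2:F) = 0) (a b c d : F) (hdet : a * d - b * c = 1) :
    ((-1)*c*d^3 + (1)*c^3*d + (-1)*b*d^3 + (1)*b^3*d + (1)*a*c*d^2 + (1)*a*b*d^2 + (-1)*a*b*c^2 + (-1)*a*b^2*c) + ((-1)*b*c^2*d + (-1)*b^2*c*d + (1)*a*c^3 + (1)*a*b^3 + (1)*a^2*c*d + (1)*a^2*b*d + (-1)*a^3*c + (-1)*a^3*b) = (a+d)*(b+c)*((a+d)+(b+c))^2 := by
  linear_combination ((-2)*c*d + (-4)*c^2 + (-2)*b*d + (-8)*b*c + (-4)*b^2 + (-2)*a*c + (-2)*a*b) * hdet + ((-1)*c*d + (-1)*c*d^3 + (-2)*c^2 + (-1)*c^2*d^2 + (-1)*b*d + (-1)*b*d^3 + (-4)*b*c + (-2)*b*c*d^2 + (-3)*b*c^2*d + (-2)*b*c^3 + (-2)*b^2 + (-1)*b^2*d^2 + (-3)*b^2*c*d + (-4)*b^2*c^2 + (-2)*b^3*c + (-1)*a*c + (-1)*a*b + (-3)*a*b*c^2 + (-3)*a*b^2*c + (-1)*a^2*c^2 + (-2)*a^2*b*c + (-1)*a^2*b^2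 + (-1)*a^3*c + (-1)*a^3*b) * h2

lemma id3 (h2 : (2:F) = 0) (a b c d : F) (hdet : a * d - b * c = 1) :
    ((a+d)+(b+c))^2*(((-1)*c^2*d^2 + (1)*c^4 + (-1)*b*c*d^2 + (1)*a*c^2*d + (1)*a*b^2*d + (1)*a^2*d^2 + (-1)*a^2*c^2 + (-1)*a^2*b*c) + ((-1)*c*d^3 + (1)*c^3*d + (-1)*b*d^3 + (1)*b^3*d + (1)*a*c*d^2 + (1)*a*b*d^2 + (-1)*a*b*c^2 + (-1)*a*b^2*c)) = ((b+c)^2+(b+c)^4+(b+c)^6+(a+d)*(b+c)^3+(a+d)*(b+c)^5+(a+d)^2+(a+d)^2*(b+c)^2+(a+d)^3*(b+c)+(a+d)^4*(b+c)^2+(a+d)^5*(b+c)) + (a+b)*(b+c)*((a+d)+(b+c))^4 := by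
  linear_combination ((1)*d^2 + (-14)*c*d + (-7)*c*d^3 + (-17)*c^2 + (-9)*c^2*d^2 + (-3)*c^3*d + (1)*c^4 + (-14)*b*d + (-7)*b*d^3 + (-38)*b*c + (-21)*b*c*d^2 + (-41)*b*c^2*d + (-41)*b*c^3 + (-21)*b^2 + (-11)*b^2*d^2 + (-51)*b^2*c*d + (-98)*b^2*c^2 + (-13)*b^3*d + (-69)*b^3*c + (-13)*b^4 + (2)*a*d + (1)*a*d^3 + (-16)*a*c + (-11)*a*c*d^2 + (-15)*a*c^2*d + (-11)*a*c^3 + (-16)*a*b + (-11)*a*b*d^2 + (-36)*a*b*c*d + (-65)*a*b*c^2 + (-19)*a*b^2*d + (-75)*a*b^2*c + (-21)*a*b^3 + (1)*a^2 + (2)*a^2*d^2 + (-13)*a^2*c*d + (-17)*a^2*c^2 + (-13)*a^2*b*d + (-37)*a^2*b*c + (-19)*a^2*b^2 + (1)*a^3*d + (-9)*a^3*c + (-9)*a^3*b) * hdet + ((-7)*c*d + (-4)*c*d^3 + (-1)*c*d^5 + (-9)*c^2 + (-5)*c^2*d^2 + (-2)*c^2*d^4 + (-2)*c^3*d + (-1)*c^3*d^3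 + (1)*c^4*d^2 + (1)*c^5*d + (-7)*b*d + (-4)*b*d^3 + (-1)*b*d^5 + (-20)*b*c + (-11)*b*c*d^2 + (-4)*b*c*d^4 + (-29)*b*c^2*d + (-9)*b*c^2*d^3 + (-31)*b*c^3 + (-8)*b*c^3*d^2 + (-4)*b*c^4*d + (-2)*b*c^5 + (-11)*b^2 + (-6)*b^2*d^2 + (-2)*b^2*d^4 + (-34)*b^2*c*d + (-10)*b^2*c*d^3 + (-71)*b^2*c^2 + (-21)*b^2*c^2*d^2 + (-33)*b^2*c^3*d + (-30)*b^2*c^4 + (-7)*b^3*d + (-2)*b^3*d^3 + (-47)*b^3*c + (-14)*b^3*c*d^2 + (-42)*b^3*c^2*d + (-64)*b^3*c^3 + (-7)*b^4 + (-2)*b^4*d^2 + (-16)*b^4*c*d + (-47)*b^4*c^2 + (-2)*b^5*d + (-12)*b^5*c + (-1)*b^6 + (-8)*a*c + (-6)*a*c^3 + (-8)*a*b + (-42)*a*b*c^2 + (-12)*a*b*c^4 + (-47)*a*b^2*c + (-52)*a*b^2*c^3 + (-11)*a*b^3 + (-61)*a*b^3*c^2 + (-24)*a*b^4*c + (-3)*a*b^5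 + (-9)*a^2*c^2 + (-2)*a^2*c^4 + (-19)*a^2*b*c + (-22)*a^2*b*c^3 + (-10)*a^2*b^2 + (-43)*a^2*b^2*c^2 + (-28)*a^2*b^3*c + (-5)*a^2*b^4 + (-5)*a^3*c + (-4)*a^3*c^3 + (-5)*a^3*b + (-18)*a^3*b*c^2 + (-19)*a^3*b^2*c + (-5)*a^3*b^3 + (-3)*a^4*c^2 + (-6)*a^4*b*c + (-3)*a^4*b^2 + (-1)*a^5*c + (-1)*a^5*b) * h2

lemma id4 (h2 : (2:F) = 0) (a b c d : F) (hdet : a * d - b * c = 1) :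
    a*((a+d)+(b+c)) = 1 + (a+b)^2 + (a+b)*(b+c) := by
  linear_combination ((1)) * hdet + ((-1)*b^2 + (-1)*a*b) * h2

end Identities

section Core
variable {F : Type*} [Field F]

lemma theta_word {G : Type*} [Group G] (u g : G) :
    thetaMap u g = u⁻¹ * g * u * g⁻¹ * u⁻¹ * g⁻¹ * u * g := by
  unfold thetaMap; group

lemma hdet2 (g : Matrix.SpecialLinearGroup (Fin 2) F) :
    g.val 0 0 * g.val 1 1 - g.val 0 1 * g.val 1 0 = 1 := by
  have := g.2; rwa [Matrix.det_fin_two] at this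

lemma theta_val (u g : Matrix.SpecialLinearGroup (Fin 2) F)
    (hu : (u : Matrix (Fin 2) (Fin 2) F) = !![0, 1; 1, 0]) :
    (thetaMap u g).val = !![(-1)*(g.val 1 0)^2*(g.val 1 1)^2 + (1)*(g.val 1 0)^4 + (-1)*(g.val 0 1)*(g.val 1 0)*(g.val 1 1)^2 + (1)*(g.val 0 0)*(g.val 1 0)^2*(g.val 1 1) + (1)*(g.val 0 0)*(g.val 0 1)^2*(g.val 1 1) + (1)*(g.val 0 0)^2*(g.val 1 1)^2 + (-1)*(g.val 0 0)^2*(g.val 1 0)^2 + (-1)*(g.val 0 0)^2*(g.val 0 1)*(g.val 1 0), (-1)*(g.val 1 0)*(g.val 1 1)^3 + (1)*(g.val 1 0)^3*(g.val 1 1) + (-1)*(g.val 0 1)*(g.val 1 1)^3 + (1)*(g.val 0 1)^3*(g.val 1 1) + (1)*(g.val 0 0)*(g.val 1 0)*(g.val 1 1)^2 + (1)*(g.val 0 0)*(g.val 0 1)*(g.val 1 1)^2 + (-1)*(g.val 0 0)*(g.val 0 1)*(g.val 1 0)^2 + (-1)*(g.val 0 0)*(g.val 0 1)^2*(g.val 1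 0); (-1)*(g.val 0 1)*(g.val 1 0)^2*(g.val 1 1) + (-1)*(g.val 0 1)^2*(g.val 1 0)*(g.val 1 1) + (1)*(g.val 0 0)*(g.val 1 0)^3 + (1)*(g.val 0 0)*(g.val 0 1)^3 + (1)*(g.val 0 0)^2*(g.val 1 0)*(g.val 1 1) + (1)*(g.val 0 0)^2*(g.val 0 1)*(g.val 1 1) + (-1)*(g.val 0 0)^3*(g.val 1 0) + (-1)*(g.val 0 0)^3*(g.val 0 1), (-1)*(g.val 0 1)*(g.val 1 0)*(g.val 1 1)^2 + (-1)*(g.val 0 1)^2*(g.val 1 1)^2 + (1)*(g.val 0 1)^4 + (1)*(g.val 0 0)*(g.val 1 0)^2*(g.val 1 1) + (1)*(g.val 0 0)*(g.val 0 1)^2*(g.val 1 1) + (1)*(g.val 0 0)^2*(g.val 1 1)^2 + (-1)*(g.val 0 0)^2*(g.val 0 1)*(g.val 1 0) + (-1)*(g.val 0 0)^2*(g.val 0 1)^2] := by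
  rw [theta_word]
  have hg := Matrix.eta_fin_two g.val
  simp only [Matrix.SpecialLinearGroup.coe_mul, Matrix.SpecialLinearGroup.coe_inv]
  rw [hu]
  conv_lhs => rw [hg]
  simp only [Matrix.adjugate_fin_two, Matrix.cons_val_zero, Matrix.cons_val_one,
    Matrix.head_cons, Matrix.head_fin_const, Matrix.cons_val', Matrix.empty_val',
    Matrix.cons_val_fin_one, Matrix.mul_fin_two]
  ext i j
  fin_cases i <;> fin_cases j <;>
    simp [Matrix.cons_val_zero, Matrix.cons_val_one, Matrix.head_cons] <;> ring

lemma theta_T (h2 : (2:F) = 0) (u g : Matrix.SpecialLinearGroup (Fin 2) F)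
    (hu : (u : Matrix (Fin 2) (Fin 2) F) = !![0, 1; 1, 0]) :
    (thetaMap u g).val 0 0 + (thetaMap u g).val 1 1 =
      (g.val 0 1 + g.val 1 0)^2 * ((g.val 0 0 + g.val 1 1) + (g.val 0 1 + g.val 1 0))^2 := by
  rw [theta_val u g hu]
  simp only [Fin.isValue, Matrix.of_apply, Matrix.cons_val', Matrix.cons_val_zero,
    Matrix.empty_val', Matrix.cons_val_fin_one, Matrix.cons_val_one, Matrix.head_cons,
    Matrix.head_fin_const]
  linear_combination id1 h2 (g.val 0 0) (g.val 0 1) (g.val 1 0) (g.val 1 1) (hdet2 g)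

lemma theta_S (h2 : (2:F) = 0) (u g : Matrix.SpecialLinearGroup (Fin 2) F)
    (hu : (u : Matrix (Fin 2) (Fin 2) F) = !![0, 1; 1, 0]) :
    (thetaMap u g).val 0 1 + (thetaMap u g).val 1 0 =
      (g.val 0 0 + g.val 1 1) * (g.val 0 1 + g.val 1 0) *
        ((g.val 0 0 + g.val 1 1) + (g.val 0 1 + g.val 1 0))^2 := by
  rw [theta_val u g hu]
  simp only [Fin.isValue, Matrix.of_apply, Matrix.cons_val', Matrix.cons_val_zero,
    Matrix.empty_val', Matrix.cons_val_fin_one, Matrix.cons_val_one, Matrix.head_cons,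
    Matrix.head_fin_const]
  linear_combination id2 h2 (g.val 0 0) (g.val 0 1) (g.val 1 0) (g.val 1 1) (hdet2 g)

lemma theta_P (h2 : (2:F) = 0) (u g : Matrix.SpecialLinearGroup (Fin 2) F)
    (hu : (u : Matrix (Fin 2) (Fin 2) F) = !![0, 1; 1, 0]) :
    ((g.val 0 0 + g.val 1 1) + (g.val 0 1 + g.val 1 0))^2 *
        ((thetaMap u g).val 0 0 + (thetaMap u g).val 0 1) =
      ((g.val 0 1 + g.val 1 0)^2+(g.val 0 1 + g.val 1 0)^4+(g.val 0 1 + g.val 1 0)^6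
        +(g.val 0 0 + g.val 1 1)*(g.val 0 1 + g.val 1 0)^3
        +(g.val 0 0 + g.val 1 1)*(g.val 0 1 + g.val 1 0)^5
        +(g.val 0 0 + g.val 1 1)^2
        +(g.val 0 0 + g.val 1 1)^2*(g.val 0 1 + g.val 1 0)^2
        +(g.val 0 0 + g.val 1 1)^3*(g.val 0 1 + g.val 1 0)
        +(g.val 0 0 + g.val 1 1)^4*(g.val 0 1 + g.val 1 0)^2
        +(g.val 0 0 + g.val 1 1)^5*(g.val 0 1 + g.val 1 0))
      + (g.val 0 0 + g.val 0 1)*(g.val 0 1 + g.val 1 0)*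
          ((g.val 0 0 + g.val 1 1) + (g.val 0 1 + g.val 1 0))^4 := by
  rw [theta_val u g hu]
  simp only [Fin.isValue, Matrix.of_apply, Matrix.cons_val', Matrix.cons_val_zero,
    Matrix.empty_val', Matrix.cons_val_fin_one, Matrix.cons_val_one, Matrix.head_cons,
    Matrix.head_fin_const]
  linear_combination id3 h2 (g.val 0 0) (g.val 0 1) (g.val 1 0) (g.val 1 1) (hdet2 g)

end Core

section Dyn
variable {F : Type*} [Field F]

/-- The invariant set `S`: both "traces" and their sum are nonzero. -/
def Scond (g : Matrix.SpecialLinearGroup (Fin 2) F) : Prop :=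
  (g.val 0 0 + g.val 1 1 ≠ 0) ∧ (g.val 0 1 + g.val 1 0 ≠ 0) ∧
    ((g.val 0 0 + g.val 1 1) + (g.val 0 1 + g.val 1 0) ≠ 0)

lemma Scond_theta (h2 : (2:F) = 0) (u g : Matrix.SpecialLinearGroup (Fin 2) F)
    (hu : (u : Matrix (Fin 2) (Fin 2) F) = !![0, 1; 1, 0]) (hg : Scond g) :
    Scond (thetaMap u g) := by
  obtain ⟨ht, hs, hts⟩ := hg
  refine ⟨?_, ?_, ?_⟩
  · rw [theta_T h2 u g hu]
    exact mul_ne_zero (pow_ne_zero _ hs) (pow_ne_zero _ hts)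
  · rw [theta_S h2 u g hu]
    exact mul_ne_zero (mul_ne_zero ht hs) (pow_ne_zero _ hts)
  · rw [theta_T h2 u g hu, theta_S h2 u g hu]
    have : (g.val 0 1 + g.val 1 0)^2 * ((g.val 0 0 + g.val 1 1) + (g.val 0 1 + g.val 1 0))^2
        + (g.val 0 0 + g.val 1 1) * (g.val 0 1 + g.val 1 0) *
          ((g.val 0 0 + g.val 1 1) + (g.val 0 1 + g.val 1 0))^2
        = (g.val 0 1 + g.val 1 0) * ((g.val 0 0 + g.val 1 1) + (g.val 0 1 + g.val 1 0))^3 := by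
      ring
    rw [this]
    exact mul_ne_zero hs (pow_ne_zero _ hts)

lemma sq_cancel (h2 : (2:F) = 0) {x y : F} (h : x^2 = y^2) : x = y := by
  have h0 : (x - y)^2 = 0 := by linear_combination h + (y^2 - x*y) * h2
  exact sub_eq_zero.mp (sq_eq_zero_iff.mp h0)

lemma entry_det {g : Matrix.SpecialLinearGroup (Fin 2) F} {a b c d : F}
    (hgv : g.val = !![a, b; c, d]) : a * d - b * c = 1 := by
  have := g.2
  rw [hgv, Matrix.det_fin_two] at this
  simpa using this

lemma theta_T' (h2 : (2:F) = 0) (u g : Matrix.SpecialLinearGroup (Fin 2) F)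
    (hu : (u : Matrix (Fin 2) (Fin 2) F) = !![0, 1; 1, 0]) {a b c d : F}
    (hgv : g.val = !![a, b; c, d]) :
    (thetaMap u g).val 0 0 + (thetaMap u g).val 1 1 = (b+c)^2*((a+d)+(b+c))^2 := by
  have h := theta_T h2 u g hu
  rw [hgv] at h
  simp only [Fin.isValue, Matrix.of_apply, Matrix.cons_val', Matrix.cons_val_zero,
    Matrix.empty_val', Matrix.cons_val_fin_one, Matrix.cons_val_one, Matrix.head_cons,
    Matrix.head_fin_const] at h
  linear_combination h

lemma theta_S' (h2 : (2:F) = 0) (u g : Matrix.SpecialLinearGroup (Fin 2) F)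
    (hu : (u : Matrix (Fin 2) (Fin 2) F) = !![0, 1; 1, 0]) {a b c d : F}
    (hgv : g.val = !![a, b; c, d]) :
    (thetaMap u g).val 0 1 + (thetaMap u g).val 1 0 = (a+d)*(b+c)*((a+d)+(b+c))^2 := by
  have h := theta_S h2 u g hu
  rw [hgv] at h
  simp only [Fin.isValue, Matrix.of_apply, Matrix.cons_val', Matrix.cons_val_zero,
    Matrix.empty_val', Matrix.cons_val_fin_one, Matrix.cons_val_one, Matrix.head_cons,
    Matrix.head_fin_const] at h
  linear_combination h

lemma theta_P' (h2 : (2:F) = 0) (u g : Matrix.SpecialLinearGroup (Fin 2) F)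
    (hu : (u : Matrix (Fin 2) (Fin 2) F) = !![0, 1; 1, 0]) {a b c d : F}
    (hgv : g.val = !![a, b; c, d]) :
    ((a+d)+(b+c))^2 * ((thetaMap u g).val 0 0 + (thetaMap u g).val 0 1) =
      ((b+c)^2+(b+c)^4+(b+c)^6+(a+d)*(b+c)^3+(a+d)*(b+c)^5+(a+d)^2+(a+d)^2*(b+c)^2
        +(a+d)^3*(b+c)+(a+d)^4*(b+c)^2+(a+d)^5*(b+c))
      + (a+b)*(b+c)*((a+d)+(b+c))^4 := by
  have h := theta_P h2 u g hu
  rw [hgv] at h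
  simp only [Fin.isValue, Matrix.of_apply, Matrix.cons_val', Matrix.cons_val_zero,
    Matrix.empty_val', Matrix.cons_val_fin_one, Matrix.cons_val_one, Matrix.head_cons,
    Matrix.head_fin_const] at h
  linear_combination h

set_option maxHeartbeats 1000000 in
lemma theta_inj (h2 : (2:F) = 0) (u : Matrix.SpecialLinearGroup (Fin 2) F)
    (hu : (u : Matrix (Fin 2) (Fin 2) F) = !![0, 1; 1, 0])
    (g g' : Matrix.SpecialLinearGroup (Fin 2) F) (hg : Scond g) (hg' : Scond g')
    (heq : thetaMap u g = thetaMap u g') : g = g' := by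
  obtain ⟨ht, hs, hts⟩ := hg
  obtain ⟨ht', hs', hts'⟩ := hg'
  obtain ⟨a, b, c, d, hgv⟩ : ∃ a b c d, g.val = !![a, b; c, d] :=
    ⟨_, _, _, _, Matrix.eta_fin_two g.val⟩
  obtain ⟨a', b', c', d', hgv'⟩ : ∃ a b c d, g'.val = !![a, b; c, d] :=
    ⟨_, _, _, _, Matrix.eta_fin_two g'.val⟩
  rw [hgv] at ht hs hts
  rw [hgv'] at ht' hs' hts'
  simp only [Fin.isValue, Matrix.of_apply, Matrix.cons_val', Matrix.cons_val_zero,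
    Matrix.empty_val', Matrix.cons_val_fin_one, Matrix.cons_val_one, Matrix.head_cons,
    Matrix.head_fin_const] at ht hs hts ht' hs' hts'
  have e1 : (b + c)^2 * ((a + d) + (b + c))^2 = (b' + c')^2 * ((a' + d') + (b' + c'))^2 := by
    rw [← theta_T' h2 u g hu hgv, ← theta_T' h2 u g' hu hgv', heq]
  have e2 : (a + d) * (b + c) * ((a + d) + (b + c))^2
      = (a' + d') * (b' + c') * ((a' + d') + (b' + c'))^2 := by
    rw [← theta_S' h2 u g hu hgv, ← theta_S' h2 u g' hu hgv', heq]
  have u1 : (b + c) * ((a + d) + (b + c)) = (b' + c') * ((a' + d') + (b' + c')) := by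
    apply sq_cancel h2; linear_combination e1
  have v1 : (a + d) * ((a + d) + (b + c)) = (a' + d') * ((a' + d') + (b' + c')) := by
    have key : ((a + d) * ((a + d) + (b + c))) * ((b + c) * ((a + d) + (b + c)))
        = ((a' + d') * ((a' + d') + (b' + c'))) * ((b + c) * ((a + d) + (b + c))) := by
      calc ((a + d) * ((a + d) + (b + c))) * ((b + c) * ((a + d) + (b + c)))
          = (a + d) * (b + c) * ((a + d) + (b + c))^2 := by ring
        _ = (a' + d') * (b' + c') * ((a' + d') + (b' + c'))^2 := e2
        _ = ((a' + d') * ((a' + d') + (b' + c'))) * ((b' + c') * ((a' + d') + (b' + c'))) := by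
            ring
        _ = ((a' + d') * ((a' + d') + (b' + c'))) * ((b + c) * ((a + d) + (b + c))) := by
            rw [u1]
    exact mul_right_cancel₀ (mul_ne_zero hs hts) key
  have tps : ((a + d) + (b + c)) = ((a' + d') + (b' + c')) := by
    apply sq_cancel h2; linear_combination u1 + v1
  have hseq : b + c = b' + c' := by
    apply mul_right_cancel₀ hts
    rw [u1, tps]
  have hteq : a + d = a' + d' := by
    apply mul_right_cancel₀ hts
    rw [v1, tps]
  have P1 := theta_P' h2 u g hu hgv
  have P2 := theta_P' h2 u g' hu hgv'
  rw [heq] at P1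
  rw [← hteq, ← hseq] at P2
  have P3 := P1.symm.trans P2
  have hp : (a + b) * ((b + c) * ((a + d) + (b + c))^4)
      = (a' + b') * ((b + c) * ((a + d) + (b + c))^4) := by
    linear_combination P3
  have hpeq : a + b = a' + b' := mul_right_cancel₀ (mul_ne_zero hs (pow_ne_zero _ hts)) hp
  have q1 := id4 h2 a b c d (entry_det hgv)
  have q2 := id4 h2 a' b' c' d' (entry_det hgv')
  rw [← hteq, ← hseq, ← hpeq] at q2
  have ha : a = a' := by
    apply mul_right_cancel₀ hts
    rw [q1, q2]
  have hb : b = b' := by linear_combination hpeq - ha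
  have hd : d = d' := by linear_combination hteq - ha
  have hc : c = c' := by linear_combination hseq - hb
  apply Subtype.ext
  rw [hgv, hgv', ha, hb, hc, hd]

lemma exists_period [Fintype F] (h2 : (2:F) = 0)
    (u : Matrix.SpecialLinearGroup (Fin 2) F)
    (hu : (u : Matrix (Fin 2) (Fin 2) F) = !![0, 1; 1, 0])
    (g : Matrix.SpecialLinearGroup (Fin 2) F) (hg : Scond g) :
    ∃ n > 0, (thetaMap u)^[n] g = g := by
  classical
  let T := {x : Matrix.SpecialLinearGroup (Fin 2) F // Scond x}
  have : Finite T := inferInstance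
  let f : T → T := fun x => ⟨thetaMap u x.val, Scond_theta h2 u x.val hu x.2⟩
  have hfinj : Function.Injective f := by
    intro x y hxy
    exact Subtype.ext (theta_inj h2 u hu x.val y.val x.2 y.2 (congrArg Subtype.val hxy))
  have hiter : ∀ n, (f^[n] ⟨g, hg⟩).val = (thetaMap u)^[n] g := by
    intro n
    induction n with
    | zero => rfl
    | succ n ih =>
      rw [Function.iterate_succ_apply', Function.iterate_succ_apply']
      show thetaMap u (f^[n] ⟨g, hg⟩).val = _
      rw [ih]
  obtain ⟨i, j, hij, hmap⟩ := Finite.exists_ne_map_eq_of_infinite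
    (fun n : ℕ => f^[n] (⟨g, hg⟩ : T))
  rcases hij.lt_or_gt with hlt | hlt
  · refine ⟨j - i, by omega, ?_⟩
    have h0 : f^[i] (f^[j-i] ⟨g, hg⟩) = f^[i] ⟨g, hg⟩ := by
      rw [← Function.iterate_add_apply]
      have : i + (j - i) = j := by omega
      rw [this]; exact hmap.symm
    have h1 := hfinj.iterate i h0
    calc (thetaMap u)^[j-i] g = (f^[j-i] ⟨g, hg⟩).val := (hiter _).symm
      _ = g := by rw [h1]
  · refine ⟨i - j, by omega, ?_⟩
    have h0 : f^[j] (f^[i-j] ⟨g, hg⟩) = f^[j] ⟨g, hg⟩ := by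
      rw [← Function.iterate_add_apply]
      have : j + (i - j) = i := by omega
      rw [this]; exact hmap
    have h1 := hfinj.iterate j h0
    calc (thetaMap u)^[i-j] g = (f^[i-j] ⟨g, hg⟩).val := (hiter _).symm
      _ = g := by rw [h1]

lemma ratio_step (h2 : (2:F) = 0) (u g : Matrix.SpecialLinearGroup (Fin 2) F)
    (hu : (u : Matrix (Fin 2) (Fin 2) F) = !![0, 1; 1, 0])
    (ht : g.val 0 0 + g.val 1 1 ≠ 0) (hs : g.val 0 1 + g.val 1 0 ≠ 0)
    (hts : (g.val 0 0 + g.val 1 1) + (g.val 0 1 + g.val 1 0) ≠ 0) :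
    ((thetaMap u g).val 0 0 + (thetaMap u g).val 1 1) /
        ((thetaMap u g).val 0 1 + (thetaMap u g).val 1 0)
      = ((g.val 0 0 + g.val 1 1) / (g.val 0 1 + g.val 1 0))⁻¹ := by
  rw [theta_T h2 u g hu, theta_S h2 u g hu, inv_div]
  rw [div_eq_div_iff (mul_ne_zero (mul_ne_zero ht hs) (pow_ne_zero _ hts)) ht]
  ring

lemma orbit_ratio (h2 : (2:F) = 0) (u g : Matrix.SpecialLinearGroup (Fin 2) F)
    (hu : (u : Matrix (Fin 2) (Fin 2) F) = !![0, 1; 1, 0]) (hg : Scond g) (n : ℕ) :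
    Scond ((thetaMap u)^[n] g) ∧
      ((((thetaMap u)^[n] g).val 0 0 + ((thetaMap u)^[n] g).val 1 1) /
          (((thetaMap u)^[n] g).val 0 1 + ((thetaMap u)^[n] g).val 1 0)
        = (g.val 0 0 + g.val 1 1) / (g.val 0 1 + g.val 1 0) ∨
       (((thetaMap u)^[n] g).val 0 0 + ((thetaMap u)^[n] g).val 1 1) /
          (((thetaMap u)^[n] g).val 0 1 + ((thetaMap u)^[n] g).val 1 0)
        = ((g.val 0 0 + g.val 1 1) / (g.val 0 1 + g.val 1 0))⁻¹) := by
  induction n with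
  | zero => exact ⟨hg, Or.inl rfl⟩
  | succ n ih =>
    obtain ⟨hS, hr⟩ := ih
    obtain ⟨ht, hs, hts⟩ := hS
    rw [Function.iterate_succ_apply']
    refine ⟨Scond_theta h2 u _ hu ⟨ht, hs, hts⟩, ?_⟩
    have step := ratio_step h2 u ((thetaMap u)^[n] g) hu ht hs hts
    rcases hr with hr | hr
    · right; rw [step, hr]
    · left; rw [step, hr, inv_inv]

end Dyn

set_option maxHeartbeats 1000000 in
/-- Let `q = 2^f ≥ 4` (formalized: `F` a finite field of characteristic `2` with
`|F| ≥ 4`), let `G = SL₂(F_q)` and let `u = !![0,1;1,0]`.  Then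
`β_G(u) ≥ (q-2)/2`; every `w = !![1,1;μ,μ+1]` with `μ ∈ F_q \ F₂` lies in a
non-trivial eventual orbit of `θ_u`; and whenever `w` has entries `a b c d` with
`a+d ≠ 0` and `b+c ≠ 0`, and `θ_u(w)` has entries `A B C D` with `A+D ≠ 0` and
`B+C ≠ 0`, then `(A+D)/(B+C) = ((a+d)/(b+c))⁻¹`. -/
theorem beta_SL2_char_two {F : Type*} [Field F] [Fintype F]
    (hchar : ringChar F = 2) (hq : 4 ≤ Fintype.card F)
    (u : Matrix.SpecialLinearGroup (Fin 2) F)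
    (hu : (u : Matrix (Fin 2) (Fin 2) F) = !![0, 1; 1, 0]) :
    (Fintype.card F - 2) / 2 ≤ beta u ∧
      (∀ (w : Matrix.SpecialLinearGroup (Fin 2) F) (μ : F), μ ≠ 0 → μ ≠ 1 →
        (w : Matrix (Fin 2) (Fin 2) F) = !![1, 1; μ, μ + 1] →
        w ∈ ThetaSet u ∧ w ≠ 1) ∧
      (∀ w : Matrix.SpecialLinearGroup (Fin 2) F,
        w.val 0 0 + w.val 1 1 ≠ 0 →
        w.val 0 1 + w.val 1 0 ≠ 0 →
        (thetaMap u w).val 0 0 + (thetaMap u w).val 1 1 ≠ 0 →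
        (thetaMap u w).val 0 1 + (thetaMap u w).val 1 0 ≠ 0 →
        ((thetaMap u w).val 0 0 + (thetaMap u w).val 1 1) /
            ((thetaMap u w).val 0 1 + (thetaMap u w).val 1 0) =
          ((w.val 0 0 + w.val 1 1) / (w.val 0 1 + w.val 1 0))⁻¹) := by
  classical
  have h2 : (2:F) = 0 := by
    have h := ringChar.Nat.cast_ringChar (R := F)
    rw [hchar] at h
    exact_mod_cast h
  have Wdet : ∀ μ : F, Matrix.det !![1, 1; μ, μ + 1] = 1 := by
    intro μ; rw [Matrix.det_fin_two_of]; ring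
  set W : F → Matrix.SpecialLinearGroup (Fin 2) F := fun μ => ⟨!![1, 1; μ, μ + 1], Wdet μ⟩
    with hWdef
  have hWval : ∀ μ : F, (W μ).val = !![1, 1; μ, μ + 1] := fun μ => rfl
  have hWt : ∀ μ : F, (W μ).val 0 0 + (W μ).val 1 1 = μ := by
    intro μ
    rw [hWval]
    simp only [Fin.isValue, Matrix.of_apply, Matrix.cons_val', Matrix.cons_val_zero,
      Matrix.empty_val', Matrix.cons_val_fin_one, Matrix.cons_val_one, Matrix.head_cons,
      Matrix.head_fin_const]
    linear_combination h2
  have hWs : ∀ μ : F, (W μ).val 0 1 + (W μ).val 1 0 = 1 + μ := by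
    intro μ
    rw [hWval]
    simp only [Fin.isValue, Matrix.of_apply, Matrix.cons_val', Matrix.cons_val_zero,
      Matrix.empty_val', Matrix.cons_val_fin_one, Matrix.cons_val_one, Matrix.head_cons,
      Matrix.head_fin_const]
  have hone : ∀ μ : F, μ ≠ 1 → (1:F) + μ ≠ 0 := by
    intro μ h hcon
    apply h
    linear_combination hcon - h2
  have hWS : ∀ μ : F, μ ≠ 0 → μ ≠ 1 → Scond (W μ) := by
    intro μ h0 h1
    refine ⟨?_, ?_, ?_⟩
    · rw [hWt]; exact h0
    · rw [hWs]; exact hone μ h1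
    · rw [hWt, hWs]
      have : μ + (1 + μ) = 1 := by linear_combination μ * h2
      rw [this]; exact one_ne_zero
  have hWmem : ∀ μ : F, μ ≠ 0 → μ ≠ 1 → W μ ∈ ThetaSet u :=
    fun μ h0 h1 => exists_period h2 u hu (W μ) (hWS μ h0 h1)
  have hWne1 : ∀ μ : F, μ ≠ 0 → W μ ≠ 1 := by
    intro μ h0 hcon
    apply h0
    have h := congrArg (fun x : Matrix.SpecialLinearGroup (Fin 2) F => x.val 1 0) hcon
    simpa [hWval] using h
  have part2 : ∀ (w : Matrix.SpecialLinearGroup (Fin 2) F) (μ : F), μ ≠ 0 → μ ≠ 1 →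
      (w : Matrix (Fin 2) (Fin 2) F) = !![1, 1; μ, μ + 1] → w ∈ ThetaSet u ∧ w ≠ 1 := by
    intro w μ h0 h1 hw
    have hwW : w = W μ := Subtype.ext (by rw [hw, hWval])
    rw [hwW]
    exact ⟨hWmem μ h0 h1, hWne1 μ h0⟩
  have part3 : ∀ w : Matrix.SpecialLinearGroup (Fin 2) F,
      w.val 0 0 + w.val 1 1 ≠ 0 →
      w.val 0 1 + w.val 1 0 ≠ 0 →
      (thetaMap u w).val 0 0 + (thetaMap u w).val 1 1 ≠ 0 →
      (thetaMap u w).val 0 1 + (thetaMap u w).val 1 0 ≠ 0 →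
      ((thetaMap u w).val 0 0 + (thetaMap u w).val 1 1) /
          ((thetaMap u w).val 0 1 + (thetaMap u w).val 1 0) =
        ((w.val 0 0 + w.val 1 1) / (w.val 0 1 + w.val 1 0))⁻¹ := by
    intro w ht hs hT _
    have hts : (w.val 0 0 + w.val 1 1) + (w.val 0 1 + w.val 1 0) ≠ 0 := by
      intro hcon
      apply hT
      rw [theta_T h2 u w hu, hcon]
      ring
    exact ratio_step h2 u w hu ht hs hts
  refine ⟨?_, part2, part3⟩
  -- the counting argument
  set s0 : Finset F := Finset.univ \ {0, 1} with hs0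
  have hmem0 : ∀ μ : F, μ ∈ s0 ↔ μ ≠ 0 ∧ μ ≠ 1 := by
    intro μ; simp [hs0]
  have hs0card : s0.card = Fintype.card F - 2 := by
    rw [hs0, Finset.card_sdiff_of_subset (Finset.subset_univ _), Finset.card_univ]
    congr 1
    rw [Finset.card_insert_of_notMem (by simp), Finset.card_singleton]
  set f : F → Set (Matrix.SpecialLinearGroup (Fin 2) F) := fun μ => thetaOrbit u (W μ)
    with hfdef
  have hself : ∀ μ : F, W μ ∈ f μ := fun μ => ⟨0, rfl⟩
  have him : ∀ O ∈ s0.image f, O ∈ eventualOrbits u := by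
    intro O hO
    obtain ⟨μ, hμ, rfl⟩ := Finset.mem_image.mp hO
    obtain ⟨h0, h1⟩ := (hmem0 μ).mp hμ
    refine ⟨⟨W μ, hWmem μ h0 h1, rfl⟩, ?_⟩
    intro hcon
    have hmem1 : W μ ∈ ({1} : Set (Matrix.SpecialLinearGroup (Fin 2) F)) := hcon ▸ hself μ
    exact hWne1 μ h0 (by simpa using hmem1)
  have hfib : ∀ O ∈ s0.image f, (s0.filter (fun μ => f μ = O)).card ≤ 2 := by
    intro O hO
    obtain ⟨μ₀, hμ₀, rfl⟩ := Finset.mem_image.mp hO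
    obtain ⟨h0, h1⟩ := (hmem0 μ₀).mp hμ₀
    have hsub : s0.filter (fun μ => f μ = f μ₀) ⊆ {μ₀, μ₀ + 1} := by
      intro ν hν
      obtain ⟨hνs, hfeq⟩ := Finset.mem_filter.mp hν
      obtain ⟨hν0, hν1⟩ := (hmem0 ν).mp hνs
      have hmemν : W ν ∈ f μ₀ := hfeq ▸ hself ν
      obtain ⟨n, hn⟩ := hmemν
      have horb := (orbit_ratio h2 u (W μ₀) hu (hWS μ₀ h0 h1) n).2
      rw [hn, hWt ν, hWs ν, hWt μ₀, hWs μ₀] at horb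
      have hν1' := hone ν hν1
      have hμ1' := hone μ₀ h1
      rcases horb with h | h
      · have h' := (div_eq_div_iff hν1' hμ1').mp h
        have : ν = μ₀ := by linear_combination h'
        simp [this]
      · rw [inv_div] at h
        have h' := (div_eq_div_iff hν1' h0).mp h
        have : ν = μ₀ + 1 := by linear_combination (-1) * h' + (-(μ₀ + 1)) * h2
        simp [this]
    calc (s0.filter (fun μ => f μ = f μ₀)).card
        ≤ ({μ₀, μ₀ + 1} : Finset F).card := Finset.card_le_card hsub
      _ ≤ 2 := le_trans (Finset.card_insert_le _ _) (by simp)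
  have hcount := Finset.card_le_mul_card_image s0 2 hfib
  have himage_le : (s0.image f).card ≤ beta u := by
    have hsub : ↑(s0.image f) ⊆ eventualOrbits u := by
      intro O hO
      exact him O (by exact_mod_cast hO)
    have h := Set.ncard_le_ncard hsub (Set.toFinite _)
    rwa [Set.ncard_coe_finset] at h
  have hle : Fintype.card F - 2 ≤ 2 * (s0.image f).card := hs0card ▸ hcount
  have hdiv : (Fintype.card F - 2) / 2 ≤ (s0.image f).card := by
    have h := Nat.div_le_div_right (c := 2) hle
    simpa [Nat.mul_div_cancel_left] using h
  exact le_trans hdiv himage_le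
end
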